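/- arXiv:2508.08013 — 5 statements merged into one kernel-verified Lean document; each statement's English description precedes it below -/
import Mathlib

section
/- Let F : ℝ^d → ℝ be twice continuously differentiable with ‖∇²F(θ)‖ ≤ b (operator norm) for every θ ∈ ℝ^d, and let Φ be a random vector in ℝ^d satisfying the perturbation assumption with constants b₁, b₂ > 0. Then for every θ ∈ ℝ^d and every γ > 0, ‖E[Φ (F(θ + γΦ) − F(θ − γΦ))] − 2 b₁ γ ∇F(θ)‖ ≤ b b₂³ γ². -/
open MeasureTheory

section Aux

variable {d : ℕ}

private lemma zob_coord_le_norm (x : EuclideanSpace ℝ (Fin d)) (j : Fin d) :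
    |x j| ≤ ‖x‖ := by
  rw [EuclideanSpace.norm_eq, ← Real.sqrt_sq_eq_abs]
  apply Real.sqrt_le_sqrt
  have : |x j| ^ 2 ≤ ∑ i, ‖x i‖ ^ 2 := by
    have := Finset.single_le_sum (f := fun i => ‖x i‖ ^ 2)
      (fun i _ => by positivity) (Finset.mem_univ j)
    simpa [Real.norm_eq_abs, sq_abs] using this
  simpa [sq_abs] using this

private lemma zob_fderiv_lip (F : EuclideanSpace ℝ (Fin d) → ℝ) (b : ℝ)
    (hF : ContDiff ℝ 2 F)
    (hb : ∀ θ : EuclideanSpace ℝ (Fin d), ‖iteratedFDeriv ℝ 2 F θ‖ ≤ b)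
    (x y : EuclideanSpace ℝ (Fin d)) :
    ‖fderiv ℝ F x - fderiv ℝ F y‖ ≤ b * ‖x - y‖ := by
  have hdF : Differentiable ℝ (fderiv ℝ F) :=
    (hF.fderiv_right (m := 1) (by norm_num)).differentiable (by norm_num)
  have hbound : ∀ z : EuclideanSpace ℝ (Fin d), ‖fderiv ℝ (fderiv ℝ F) z‖ ≤ b := by
    intro z
    have h0 : ‖fderiv ℝ (fderiv ℝ F) z‖ = ‖iteratedFDeriv ℝ 2 F z‖ := by
      rw [← norm_iteratedFDeriv_zero (𝕜 := ℝ) (f := fderiv ℝ (fderiv ℝ F)) (x := z),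
        norm_iteratedFDeriv_fderiv, norm_iteratedFDeriv_fderiv]
    rw [h0]; exact hb z
  simpa using
    (convex_univ (𝕜 := ℝ) (E := EuclideanSpace ℝ (Fin d))).norm_image_sub_le_of_norm_fderiv_le
      (fun z _ => hdF z) (fun z _ => hbound z) (Set.mem_univ y) (Set.mem_univ x)

private lemma zob_taylor (F : EuclideanSpace ℝ (Fin d) → ℝ) (b : ℝ)
    (hF : ContDiff ℝ 2 F)
    (hb : ∀ θ : EuclideanSpace ℝ (Fin d), ‖iteratedFDeriv ℝ 2 F θ‖ ≤ b)
    (θ v : EuclideanSpace ℝ (Fin d)) :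
    |F (θ + v) - F (θ - v) - 2 * fderiv ℝ F θ v| ≤ b * ‖v‖ ^ 2 := by
  have hdiff : Differentiable ℝ F := hF.differentiable (by norm_num)
  have hcont : Continuous (fderiv ℝ F) := hF.continuous_fderiv (by norm_num)
  set ψ : ℝ → ℝ := fun t => fderiv ℝ F (θ + t • v) v + fderiv ℝ F (θ - t • v) v with hψ
  have hderiv : ∀ t : ℝ, HasDerivAt (fun t => F (θ + t • v) - F (θ - t • v)) (ψ t) t := by
    intro t
    have h1 : HasDerivAt (fun t : ℝ => θ + t • v) v t := by
      simpa using ((hasDerivAt_id t).smul_const v).const_add θ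
    have h2 : HasDerivAt (fun t : ℝ => θ - t • v) (-v) t := by
      simpa using ((hasDerivAt_id t).smul_const v).const_sub θ
    have hA := (hdiff (θ + t • v)).hasFDerivAt.comp_hasDerivAt t h1
    have hB := (hdiff (θ - t • v)).hasFDerivAt.comp_hasDerivAt t h2
    have := hA.sub hB
    exact this.congr_deriv (by simp [hψ])
  have hψcont : Continuous ψ := by
    apply Continuous.add
    · exact (hcont.comp (continuous_const.add (continuous_id.smul continuous_const))).clm_apply
        continuous_const
    · exact (hcont.comp (continuous_const.sub (continuous_id.smul continuous_const))).clm_apply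
        continuous_const
  have hFTC : ∫ t in (0:ℝ)..1, ψ t =
      (F (θ + v) - F (θ - v)) - (F (θ + (0:ℝ) • v) - F (θ - (0:ℝ) • v)) := by
    have := intervalIntegral.integral_eq_sub_of_hasDerivAt
      (f := fun t => F (θ + t • v) - F (θ - t • v)) (f' := ψ)
      (fun t _ => hderiv t) (hψcont.intervalIntegrable 0 1)
    simpa using this
  have hFTC' : ∫ t in (0:ℝ)..1, ψ t = F (θ + v) - F (θ - v) := by
    rw [hFTC]; simp
  have hconst : ∫ t in (0:ℝ)..1, (2 * fderiv ℝ F θ v) = 2 * fderiv ℝ F θ v := by simp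
  have hb0 : 0 ≤ b := le_trans (norm_nonneg _) (hb θ)
  have hdiffint : F (θ + v) - F (θ - v) - 2 * fderiv ℝ F θ v =
      ∫ t in (0:ℝ)..1, (ψ t - 2 * fderiv ℝ F θ v) := by
    rw [intervalIntegral.integral_sub (hψcont.intervalIntegrable 0 1)
      (intervalIntegrable_const), hFTC', hconst]
  rw [hdiffint]
  have hbnd : ∀ t ∈ Set.Icc (0:ℝ) 1, |ψ t - 2 * fderiv ℝ F θ v| ≤ (2 * b * ‖v‖ ^ 2) * t := by
    intro t ht
    have e1 : ψ t - 2 * fderiv ℝ F θ v =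
        (fderiv ℝ F (θ + t • v) - fderiv ℝ F θ) v +
          (fderiv ℝ F (θ - t • v) - fderiv ℝ F θ) v := by
      simp [hψ]; ring
    rw [e1]
    have hA : ‖(fderiv ℝ F (θ + t • v) - fderiv ℝ F θ) v‖ ≤ (b * (t * ‖v‖)) * ‖v‖ := by
      refine le_trans (ContinuousLinearMap.le_opNorm _ v) ?_
      apply mul_le_mul_of_nonneg_right _ (norm_nonneg v)
      have := zob_fderiv_lip F b hF hb (θ + t • v) θ
      simpa [norm_smul, abs_of_nonneg ht.1, mul_assoc] using this
    have hB : ‖(fderiv ℝ F (θ - t • v) - fderiv ℝ F θ) v‖ ≤ (b * (t * ‖v‖)) * ‖v‖ := by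
      refine le_trans (ContinuousLinearMap.le_opNorm _ v) ?_
      apply mul_le_mul_of_nonneg_right _ (norm_nonneg v)
      have := zob_fderiv_lip F b hF hb (θ - t • v) θ
      simpa [norm_smul, abs_of_nonneg ht.1, mul_assoc] using this
    calc |(fderiv ℝ F (θ + t • v) - fderiv ℝ F θ) v +
          (fderiv ℝ F (θ - t • v) - fderiv ℝ F θ) v|
        ≤ ‖(fderiv ℝ F (θ + t • v) - fderiv ℝ F θ) v‖ +
          ‖(fderiv ℝ F (θ - t • v) - fderiv ℝ F θ) v‖ := abs_add_le _ _
      _ ≤ (b * (t * ‖v‖)) * ‖v‖ + (b * (t * ‖v‖)) * ‖v‖ := add_le_add hA hB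
      _ = (2 * b * ‖v‖ ^ 2) * t := by ring
  calc |∫ t in (0:ℝ)..1, (ψ t - 2 * fderiv ℝ F θ v)|
      ≤ ∫ t in (0:ℝ)..1, |ψ t - 2 * fderiv ℝ F θ v| :=
        intervalIntegral.abs_integral_le_integral_abs zero_le_one
    _ ≤ ∫ t in (0:ℝ)..1, (2 * b * ‖v‖ ^ 2) * t := by
        apply intervalIntegral.integral_mono_on zero_le_one
        · exact (hψcont.sub continuous_const).abs.intervalIntegrable 0 1
        · exact (continuous_const.mul continuous_id).intervalIntegrable 0 1
        · intro t ht; exact hbnd t ht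
    _ = (2 * b * ‖v‖ ^ 2) * (((1:ℝ) ^ 2 - (0:ℝ) ^ 2) / 2) := by
        rw [intervalIntegral.integral_const_mul, integral_id]
    _ = b * ‖v‖ ^ 2 := by ring

end Aux

/-- Bias bound of the two-point zero-order gradient estimator: if `F` is `C²` with Hessian
norm bounded by `b`, and `Φ` is a random vector satisfying the perturbation assumption with
constants `b₁, b₂ > 0`, then
`‖E[Φ (F(θ + γΦ) − F(θ − γΦ))] − 2 b₁ γ ∇F(θ)‖ ≤ b b₂³ γ²`. -/
theorem zero_order_bias_bound
    {d : ℕ} {Ω : Type*} [MeasurableSpace Ω] (μ : Measure Ω) [IsProbabilityMeasure μ]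
    (F : EuclideanSpace ℝ (Fin d) → ℝ) (b b₁ b₂ : ℝ) (hb₁ : 0 < b₁) (hb₂ : 0 < b₂)
    (hF : ContDiff ℝ 2 F)
    (hb : ∀ θ : EuclideanSpace ℝ (Fin d), ‖iteratedFDeriv ℝ 2 F θ‖ ≤ b)
    (Φ : Ω → EuclideanSpace ℝ (Fin d)) (hΦmeas : Measurable Φ)
    (hΦcov : ∀ j l : Fin d, j ≠ l → ∫ ω, Φ ω j * Φ ω l ∂μ = 0)
    (hΦvar : ∀ j : Fin d, ∫ ω, (Φ ω j) ^ 2 ∂μ = b₁)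
    (hΦbdd : ∀ᵐ ω ∂μ, ‖Φ ω‖ ≤ b₂)
    (θ : EuclideanSpace ℝ (Fin d)) (γ : ℝ) (hγ : 0 < γ) :
    ‖(∫ ω, (F (θ + γ • Φ ω) - F (θ - γ • Φ ω)) • Φ ω ∂μ) -
        (2 * b₁ * γ) • gradient F θ‖ ≤ b * b₂ ^ 3 * γ ^ 2 := by
  have hb0 : 0 ≤ b := le_trans (norm_nonneg _) (hb θ)
  set g : EuclideanSpace ℝ (Fin d) := gradient F θ with hg
  set D : EuclideanSpace ℝ (Fin d) →L[ℝ] ℝ := fderiv ℝ F θ with hD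
  -- gradient and fderiv
  have hgrad : ∀ w : EuclideanSpace ℝ (Fin d), D w = ∑ i, g i * w i := by
    intro w
    have h1 : (inner ℝ g w : ℝ) = D w := InnerProductSpace.toDual_symm_apply
    rw [← h1, PiLp.inner_apply]
    simp [RCLike.inner_apply]
    exact Finset.sum_congr rfl fun i _ => mul_comm _ _
  -- measurability of coordinates
  have hΦj : ∀ j : Fin d, Measurable fun ω => Φ ω j := fun j =>
    ((EuclideanSpace.proj (𝕜 := ℝ) j).continuous.measurable).comp hΦmeas
  -- integrability of coordinate products
  have hintprod : ∀ l j : Fin d, Integrable (fun ω => Φ ω l * Φ ω j) μ := by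
    intro l j
    refine Integrable.mono' (integrable_const (b₂ * b₂))
      ((hΦj l).mul (hΦj j)).aestronglyMeasurable ?_
    filter_upwards [hΦbdd] with ω hω
    rw [Real.norm_eq_abs, abs_mul]
    exact mul_le_mul (le_trans (zob_coord_le_norm _ l) hω)
      (le_trans (zob_coord_le_norm _ j) hω) (abs_nonneg _) (le_trans (abs_nonneg _)
        (le_trans (zob_coord_le_norm _ l) hω))
  -- the two scalar functions
  set G : Ω → ℝ := fun ω => F (θ + γ • Φ ω) - F (θ - γ • Φ ω) with hGdef
  set L : Ω → ℝ := fun ω => D (Φ ω) with hLdef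
  have hGmeas : Measurable G := by
    have h1 : Measurable fun ω => F (θ + γ • Φ ω) :=
      hF.continuous.measurable.comp
        ((measurable_const.add (hΦmeas.const_smul γ)) : Measurable fun ω => θ + γ • Φ ω)
    have h2 : Measurable fun ω => F (θ - γ • Φ ω) :=
      hF.continuous.measurable.comp
        ((measurable_const.sub (hΦmeas.const_smul γ)) : Measurable fun ω => θ - γ • Φ ω)
    exact h1.sub h2
  have hLmeas : Measurable L := D.continuous.measurable.comp hΦmeas
  -- taylor bound a.e.
  have htaylor : ∀ ω, |G ω - 2 * γ * L ω| ≤ b * γ ^ 2 * ‖Φ ω‖ ^ 2 := by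
    intro ω
    have := zob_taylor F b hF hb θ (γ • Φ ω)
    have hDs : D (γ • Φ ω) = γ * L ω := by simp [hLdef]
    rw [hDs] at this
    calc |G ω - 2 * γ * L ω| = |F (θ + γ • Φ ω) - F (θ - γ • Φ ω) - 2 * (γ * L ω)| := by
          rw [hGdef]; ring_nf
      _ ≤ b * ‖γ • Φ ω‖ ^ 2 := this
      _ = b * γ ^ 2 * ‖Φ ω‖ ^ 2 := by
          rw [norm_smul]; rw [Real.norm_eq_abs, mul_pow, sq_abs]; ring
  -- bounds a.e.
  have hLbdd : ∀ᵐ ω ∂μ, |L ω| ≤ ‖D‖ * b₂ := by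
    filter_upwards [hΦbdd] with ω hω
    calc |L ω| = ‖D (Φ ω)‖ := rfl
      _ ≤ ‖D‖ * ‖Φ ω‖ := D.le_opNorm _
      _ ≤ ‖D‖ * b₂ := by apply mul_le_mul_of_nonneg_left hω (norm_nonneg _)
  -- integrability of vector integrands
  have hintL : Integrable (fun ω => (2 * γ * L ω) • Φ ω) μ := by
    refine Integrable.mono' (integrable_const ((2 * γ * (‖D‖ * b₂)) * b₂))
      (((measurable_const.mul hLmeas).smul hΦmeas).aestronglyMeasurable) ?_
    filter_upwards [hΦbdd, hLbdd] with ω hω hL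
    rw [norm_smul]
    apply mul_le_mul _ hω (norm_nonneg _) (by positivity)
    rw [Real.norm_eq_abs, abs_mul]
    have : |(2:ℝ) * γ| = 2 * γ := abs_of_nonneg (by positivity)
    rw [this]
    exact mul_le_mul_of_nonneg_left hL (by positivity)
  have hintG : Integrable (fun ω => G ω • Φ ω) μ := by
    refine Integrable.mono' (integrable_const ((b * γ ^ 2 * b₂ ^ 2 + 2 * γ * (‖D‖ * b₂)) * b₂))
      ((hGmeas.smul hΦmeas).aestronglyMeasurable) ?_
    filter_upwards [hΦbdd, hLbdd] with ω hω hL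
    rw [norm_smul]
    apply mul_le_mul _ hω (norm_nonneg _) (by positivity)
    have h1 : |G ω| ≤ |G ω - 2 * γ * L ω| + |2 * γ * L ω| := by
      calc |G ω| = |(G ω - 2 * γ * L ω) + 2 * γ * L ω| := by ring_nf
        _ ≤ _ := abs_add_le _ _
    rw [Real.norm_eq_abs]
    refine le_trans h1 (add_le_add (le_trans (htaylor ω) ?_) ?_)
    · have h3 : ‖Φ ω‖ ^ 2 ≤ b₂ ^ 2 := pow_le_pow_left₀ (norm_nonneg _) hω 2
      exact mul_le_mul_of_nonneg_left h3 (by positivity)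
    · rw [abs_mul]
      have h2 : |(2:ℝ) * γ| = 2 * γ := abs_of_nonneg (by positivity)
      rw [h2]
      exact mul_le_mul_of_nonneg_left hL (by positivity)
  have hintR : Integrable (fun ω => (G ω - 2 * γ * L ω) • Φ ω) μ := by
    have : (fun ω => (G ω - 2 * γ * L ω) • Φ ω) =
        fun ω => G ω • Φ ω - (2 * γ * L ω) • Φ ω := by
      funext ω; rw [sub_smul]
    rw [this]; exact hintG.sub hintL
  -- second moment identity
  have hmain : ∫ ω, (2 * γ * L ω) • Φ ω ∂μ = (2 * b₁ * γ) • g := by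
    apply PiLp.ext
    intro j
    have hproj := (EuclideanSpace.proj (𝕜 := ℝ) j).integral_comp_comm hintL
    have hcoord : (EuclideanSpace.proj (𝕜 := ℝ) j) (∫ ω, (2 * γ * L ω) • Φ ω ∂μ) =
        ∫ ω, (2 * γ * L ω) * Φ ω j ∂μ := by
      rw [← hproj]; simp [smul_eq_mul]
    have hcoord' : (∫ ω, (2 * γ * L ω) • Φ ω ∂μ) j = ∫ ω, (2 * γ * L ω) * Φ ω j ∂μ := hcoord
    rw [hcoord']
    have hexp : ∀ ω, (2 * γ * L ω) * Φ ω j = ∑ l, (2 * γ * g l) * (Φ ω l * Φ ω j) := by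
      intro ω
      rw [hLdef]
      simp only [hgrad (Φ ω), Finset.mul_sum, Finset.sum_mul]
      apply Finset.sum_congr rfl
      intro l _; ring
    rw [show (fun ω => (2 * γ * L ω) * Φ ω j) = fun ω => ∑ l, (2 * γ * g l) * (Φ ω l * Φ ω j)
      from funext hexp]
    rw [integral_finset_sum _ (fun l _ => (hintprod l j).const_mul _)]
    have hterm : ∀ l : Fin d, ∫ ω, (2 * γ * g l) * (Φ ω l * Φ ω j) ∂μ =
        if l = j then 2 * γ * g j * b₁ else 0 := by
      intro l
      rw [integral_const_mul]
      by_cases hlj : l = j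
      · subst hlj
        have : (fun ω => Φ ω l * Φ ω l) = fun ω => (Φ ω l) ^ 2 := by
          funext ω; ring
        rw [this, hΦvar l]; simp
      · rw [hΦcov l j hlj]; simp [hlj]
    rw [Finset.sum_congr rfl (fun l _ => hterm l), Finset.sum_ite_eq' Finset.univ j
      (fun _ => 2 * γ * g j * b₁)]
    simp [PiLp.smul_apply, smul_eq_mul]
    ring
  -- decomposition
  have hdecomp : (∫ ω, G ω • Φ ω ∂μ) - (2 * b₁ * γ) • g =
      ∫ ω, (G ω - 2 * γ * L ω) • Φ ω ∂μ := by
    rw [← hmain, ← integral_sub hintG hintL]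
    congr 1; funext ω; simp [hGdef, sub_smul]
  show ‖(∫ ω, G ω • Φ ω ∂μ) - (2 * b₁ * γ) • g‖ ≤ b * b₂ ^ 3 * γ ^ 2
  rw [hdecomp]
  have hbound : ∀ᵐ ω ∂μ, ‖(G ω - 2 * γ * L ω) • Φ ω‖ ≤ b * b₂ ^ 3 * γ ^ 2 := by
    filter_upwards [hΦbdd] with ω hω
    rw [norm_smul, Real.norm_eq_abs]
    calc |G ω - 2 * γ * L ω| * ‖Φ ω‖ ≤ (b * γ ^ 2 * ‖Φ ω‖ ^ 2) * ‖Φ ω‖ :=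
          mul_le_mul_of_nonneg_right (htaylor ω) (norm_nonneg _)
      _ = b * γ ^ 2 * ‖Φ ω‖ ^ 3 := by ring
      _ ≤ b * γ ^ 2 * b₂ ^ 3 := by
          apply mul_le_mul_of_nonneg_left _ (by positivity)
          exact pow_le_pow_left₀ (norm_nonneg _) hω 3
      _ = b * b₂ ^ 3 * γ ^ 2 := by ring
  calc ‖∫ ω, (G ω - 2 * γ * L ω) • Φ ω ∂μ‖ ≤ ∫ ω, (b * b₂ ^ 3 * γ ^ 2) ∂μ :=
        norm_integral_le_of_norm_le (integrable_const _) hbound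
    _ = b * b₂ ^ 3 * γ ^ 2 := by simp
end

section
/- Let N₁ and N₂ be disjoint finite index sets, and let h_i (i ∈ N₁ ∪ N₂), n₁, n₂, n₃ be mutually independent real random variables with mean zero and finite second moments, independent of the square-integrable real random variables (X_i)_{i ∈ N₁ ∪ N₂}. Then for any real constants (a_i), E[(∑_{i∈N₁} a_i h_i + n₁)(∑_{i∈N₁} h_i X_i + ∑_{j∈N₂} a_j h_j + n₂) + (∑_{j∈N₂} h_j X_j + n₃)(∑_{i∈N₁} h_i X_i + ∑_{j∈N₂} a_j h_j + n₂)] = ∑_{i∈N₁∪N₂} a_i E[h_i²] E[X_i]. -/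
open MeasureTheory ProbabilityTheory
open scoped ENNReal

private lemma l2_mul_int {Ω : Type*} [MeasurableSpace Ω] {μ : Measure Ω}
    [IsProbabilityMeasure μ] {f g : Ω → ℝ} (hf : MemLp f 2 μ) (hg : MemLp g 2 μ) :
    Integrable (fun ω => f ω * g ω) μ := by
  have h2 : (1 : ℝ≥0∞) / 1 = 1 / 2 + 1 / 2 := by
    rw [ENNReal.div_add_div_same, one_div_one, eq_comm, ENNReal.div_eq_one_iff] <;> norm_num
  have := (hf.smul hg : MemLp (g • f) 1 μ)
  have hint := memLp_one_iff_integrable.mp this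
  simpa [smul_eq_mul, mul_comm, Pi.mul_def] using hint

/-- Three-slot asynchronous over-the-air aggregation identity: with zero-mean mutually
independent channels `h_i` (`i ∈ N₁ ∪ N₂`, `N₁, N₂` disjoint) and noises `n₁, n₂, n₃`,
all independent of the square-integrable data `(X_i)`, we have
`E[(∑_{N₁} aᵢhᵢ + n₁)(∑_{N₁} hᵢXᵢ + ∑_{N₂} aⱼhⱼ + n₂)
  + (∑_{N₂} hⱼXⱼ + n₃)(∑_{N₁} hᵢXᵢ + ∑_{N₂} aⱼhⱼ + n₂)] = ∑_{N₁∪N₂} aᵢ E[hᵢ²] E[Xᵢ]`. -/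
theorem over_the_air_aggregation_async
    {Ω : Type*} [MeasurableSpace Ω] (μ : Measure Ω) [IsProbabilityMeasure μ]
    {ι : Type*} [DecidableEq ι] (N₁ N₂ : Finset ι) (hdisj : Disjoint N₁ N₂)
    (h : ι → Ω → ℝ) (n1 n2 n3 : Ω → ℝ) (X : ι → Ω → ℝ)
    (hmeas : ∀ i ∈ N₁ ∪ N₂, Measurable (h i))
    (hn1 : Measurable n1) (hn2 : Measurable n2) (hn3 : Measurable n3)
    (hXmeas : ∀ i ∈ N₁ ∪ N₂, Measurable (X i))
    (hL2 : ∀ i ∈ N₁ ∪ N₂, MemLp (h i) 2 μ)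
    (hn1L2 : MemLp n1 2 μ) (hn2L2 : MemLp n2 2 μ) (hn3L2 : MemLp n3 2 μ)
    (hXL2 : ∀ i ∈ N₁ ∪ N₂, MemLp (X i) 2 μ)
    (hmean : ∀ i ∈ N₁ ∪ N₂, ∫ ω, h i ω ∂μ = 0)
    (hn1mean : ∫ ω, n1 ω ∂μ = 0) (hn2mean : ∫ ω, n2 ω ∂μ = 0)
    (hn3mean : ∫ ω, n3 ω ∂μ = 0)
    (hIndep : iIndepFun
      (Sum.elim (fun i : {j // j ∈ N₁ ∪ N₂} => h i.1) ![n1, n2, n3]) μ)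
    (hIndepX : IndepFun
      (fun ω => ((fun i : {j // j ∈ N₁ ∪ N₂} => h i.1 ω), n1 ω, n2 ω, n3 ω))
      (fun ω => fun i : {j // j ∈ N₁ ∪ N₂} => X i.1 ω) μ)
    (a : ι → ℝ) :
    ∫ ω, ((∑ i ∈ N₁, a i * h i ω + n1 ω) *
            (∑ i ∈ N₁, h i ω * X i ω + ∑ j ∈ N₂, a j * h j ω + n2 ω) +
          (∑ j ∈ N₂, h j ω * X j ω + n3 ω) *
            (∑ i ∈ N₁, h i ω * X i ω + ∑ j ∈ N₂, a j * h j ω + n2 ω)) ∂μ =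
      ∑ i ∈ N₁ ∪ N₂, a i * (∫ ω, (h i ω) ^ 2 ∂μ) * (∫ ω, X i ω ∂μ) := by
  classical
  set K := {j // j ∈ N₁ ∪ N₂} with hKdef
  set Z : K ⊕ Fin 3 → Ω → ℝ := Sum.elim (fun i : K => h i.1) ![n1, n2, n3] with hZ
  set Xv : Ω → K → ℝ := fun ω i => X i.1 ω with hXv
  set W : Ω → (K → ℝ) × ℝ × ℝ × ℝ :=
    fun ω => ((fun i : K => h i.1 ω), n1 ω, n2 ω, n3 ω) with hW
  have hZinl : ∀ (i : K), Z (Sum.inl i) = h i.1 := fun i => rfl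
  have hZ0 : Z (Sum.inr 0) = n1 := rfl
  have hZ1 : Z (Sum.inr 1) = n2 := rfl
  have hZ2 : Z (Sum.inr 2) = n3 := rfl
  have hZL2 : ∀ s, MemLp (Z s) 2 μ := by
    rintro (i | k)
    · exact hL2 i.1 i.2
    · fin_cases k
      · exact hn1L2
      · exact hn2L2
      · exact hn3L2
  have hZmean : ∀ s, ∫ ω, Z s ω ∂μ = 0 := by
    rintro (i | k)
    · exact hmean i.1 i.2
    · fin_cases k
      · exact hn1mean
      · exact hn2mean
      · exact hn3mean
  have hπ : ∀ s : K ⊕ Fin 3, ∃ π : ((K → ℝ) × ℝ × ℝ × ℝ) → ℝ,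
      Measurable π ∧ Z s = fun ω => π (W ω) := by
    rintro (i | k)
    · exact ⟨fun p => p.1 i, (measurable_pi_apply i).comp measurable_fst, rfl⟩
    · fin_cases k
      · exact ⟨fun p => p.2.1, measurable_fst.comp measurable_snd, rfl⟩
      · exact ⟨fun p => p.2.2.1,
          measurable_fst.comp (measurable_snd.comp measurable_snd), rfl⟩
      · exact ⟨fun p => p.2.2.2,
          measurable_snd.comp (measurable_snd.comp measurable_snd), rfl⟩
  -- the key lemma: E[Z s * Z t * G(X)] = E[Z s * Z t] * E[G(X)], with integrability
  have key : ∀ (s t : K ⊕ Fin 3) (G : (K → ℝ) → ℝ),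
      Measurable G → Integrable (fun ω => G (Xv ω)) μ →
      Integrable (fun ω => Z s ω * Z t ω * G (Xv ω)) μ ∧
      ∫ ω, Z s ω * Z t ω * G (Xv ω) ∂μ =
        (∫ ω, Z s ω * Z t ω ∂μ) * ∫ ω, G (Xv ω) ∂μ := by
    intro s t G hG hGint
    obtain ⟨πs, hπs, hzs⟩ := hπ s
    obtain ⟨πt, hπt, hzt⟩ := hπ t
    have hind : IndepFun (fun ω => Z s ω * Z t ω) (fun ω => G (Xv ω)) μ := by
      have hc := hIndepX.comp (φ := fun p => πs p * πt p) (ψ := G) (hπs.mul hπt) hG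
      have heq : (fun ω => Z s ω * Z t ω) = (fun p => πs p * πt p) ∘ W := by
        funext ω
        simp only [hzs, hzt, Function.comp_apply]
      rw [heq]
      exact hc
    have hzz : Integrable (fun ω => Z s ω * Z t ω) μ := l2_mul_int (hZL2 s) (hZL2 t)
    exact ⟨hind.integrable_mul hzz hGint, hind.integral_fun_mul_eq_mul_integral hzz.aestronglyMeasurable hGint.aestronglyMeasurable⟩
  -- vanishing of mixed second moments
  have hzero : ∀ s t, s ≠ t → ∫ ω, Z s ω * Z t ω ∂μ = 0 := by
    intro s t hst
    have hind := hIndep.indepFun hst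
    have hv := hind.integral_fun_mul_eq_mul_integral
      ((hZL2 s).integrable one_le_two).aestronglyMeasurable ((hZL2 t).integrable one_le_two).aestronglyMeasurable
    calc ∫ ω, Z s ω * Z t ω ∂μ = (∫ ω, Z s ω ∂μ) * ∫ ω, Z t ω ∂μ := hv
    _ = 0 := by rw [hZmean s, zero_mul]
  have memU1 : ∀ i ∈ N₁, i ∈ N₁ ∪ N₂ := fun i hi => Finset.mem_union_left _ hi
  have memU2 : ∀ j ∈ N₂, j ∈ N₁ ∪ N₂ := fun j hj => Finset.mem_union_right _ hj
  have hXint : ∀ i, i ∈ N₁ ∪ N₂ → Integrable (X i) μ :=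
    fun i hi => (hXL2 i hi).integrable one_le_two
  have hne12 : ∀ {i k : ι}, i ∈ N₁ → k ∈ N₂ → i ≠ k :=
    fun {i k} hi hk e => Finset.disjoint_left.mp hdisj hi (e ▸ hk)
  have hne_ll : ∀ {i k : ι} (hi : i ∈ N₁ ∪ N₂) (hk : k ∈ N₁ ∪ N₂), i ≠ k →
      (Sum.inl ⟨i, hi⟩ : K ⊕ Fin 3) ≠ Sum.inl ⟨k, hk⟩ := by
    intro i k hi hk hik
    simp only [ne_eq, Sum.inl.injEq]
    exact fun e => hik (congrArg Subtype.val e)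
  -- elementary mixed moments
  have ThhX : ∀ i k (hi : i ∈ N₁ ∪ N₂) (hk : k ∈ N₁ ∪ N₂),
      Integrable (fun ω => h i ω * h k ω * X k ω) μ ∧
      ∫ ω, h i ω * h k ω * X k ω ∂μ = (∫ ω, h i ω * h k ω ∂μ) * ∫ ω, X k ω ∂μ :=
    fun i k hi hk => key (Sum.inl ⟨i, hi⟩) (Sum.inl ⟨k, hk⟩) (fun x => x ⟨k, hk⟩)
      (measurable_pi_apply _) (hXint k hk)
  have ThhXX : ∀ i j (hi : i ∈ N₁ ∪ N₂) (hj : j ∈ N₁ ∪ N₂),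
      Integrable (fun ω => h i ω * h j ω * (X i ω * X j ω)) μ ∧
      ∫ ω, h i ω * h j ω * (X i ω * X j ω) ∂μ =
        (∫ ω, h i ω * h j ω ∂μ) * ∫ ω, X i ω * X j ω ∂μ :=
    fun i j hi hj => key (Sum.inl ⟨i, hi⟩) (Sum.inl ⟨j, hj⟩)
      (fun x => x ⟨i, hi⟩ * x ⟨j, hj⟩)
      ((measurable_pi_apply _).mul (measurable_pi_apply _))
      (l2_mul_int (hXL2 i hi) (hXL2 j hj))
  have Tn1hX : ∀ i (hi : i ∈ N₁ ∪ N₂),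
      Integrable (fun ω => n1 ω * h i ω * X i ω) μ ∧
      ∫ ω, n1 ω * h i ω * X i ω ∂μ = (∫ ω, n1 ω * h i ω ∂μ) * ∫ ω, X i ω ∂μ :=
    fun i hi => key (Sum.inr 0) (Sum.inl ⟨i, hi⟩) (fun x => x ⟨i, hi⟩)
      (measurable_pi_apply _) (hXint i hi)
  have Tn3hX : ∀ i (hi : i ∈ N₁ ∪ N₂),
      Integrable (fun ω => n3 ω * h i ω * X i ω) μ ∧
      ∫ ω, n3 ω * h i ω * X i ω ∂μ = (∫ ω, n3 ω * h i ω ∂μ) * ∫ ω, X i ω ∂μ :=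
    fun i hi => key (Sum.inr 2) (Sum.inl ⟨i, hi⟩) (fun x => x ⟨i, hi⟩)
      (measurable_pi_apply _) (hXint i hi)
  have Thn2X : ∀ i (hi : i ∈ N₁ ∪ N₂),
      Integrable (fun ω => h i ω * n2 ω * X i ω) μ ∧
      ∫ ω, h i ω * n2 ω * X i ω ∂μ = (∫ ω, h i ω * n2 ω ∂μ) * ∫ ω, X i ω ∂μ :=
    fun i hi => key (Sum.inl ⟨i, hi⟩) (Sum.inr 1) (fun x => x ⟨i, hi⟩)
      (measurable_pi_apply _) (hXint i hi)
  -- vanishing second moments, concrete versions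
  have hhZero : ∀ i k (hi : i ∈ N₁ ∪ N₂) (hk : k ∈ N₁ ∪ N₂), i ≠ k →
      ∫ ω, h i ω * h k ω ∂μ = 0 :=
    fun i k hi hk hik => hzero (Sum.inl ⟨i, hi⟩) (Sum.inl ⟨k, hk⟩) (hne_ll hi hk hik)
  have hn1hZero : ∀ i (hi : i ∈ N₁ ∪ N₂), ∫ ω, n1 ω * h i ω ∂μ = 0 :=
    fun i hi => hzero (Sum.inr 0) (Sum.inl ⟨i, hi⟩) (by simp)
  have hn3hZero : ∀ i (hi : i ∈ N₁ ∪ N₂), ∫ ω, n3 ω * h i ω ∂μ = 0 :=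
    fun i hi => hzero (Sum.inr 2) (Sum.inl ⟨i, hi⟩) (by simp)
  have hhn2Zero : ∀ i (hi : i ∈ N₁ ∪ N₂), ∫ ω, h i ω * n2 ω ∂μ = 0 :=
    fun i hi => hzero (Sum.inl ⟨i, hi⟩) (Sum.inr 1) (by simp)
  have hn1n2Zero : ∫ ω, n1 ω * n2 ω ∂μ = 0 := hzero (Sum.inr 0) (Sum.inr 1) (by simp)
  have hn3n2Zero : ∫ ω, n3 ω * n2 ω ∂μ = 0 := hzero (Sum.inr 2) (Sum.inr 1) (by simp)
  -- integrability of elementary summands, rearranged forms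
  have e1 : ∀ x y : ι, (fun ω => a y * h y ω * h x ω * X x ω)
      = fun ω => a y * (h y ω * h x ω * X x ω) := by intro x y; funext ω; ring
  have e2 : ∀ x y : ι, (fun ω => a y * h y ω * (a x * h x ω))
      = fun ω => (a y * a x) * (h y ω * h x ω) := by intro x y; funext ω; ring
  have e3 : ∀ i : ι, (fun ω => a i * h i ω * n2 ω)
      = fun ω => a i * (h i ω * n2 ω) := by intro i; funext ω; ring
  have e4 : ∀ x : ι, (fun ω => n1 ω * (h x ω * X x ω))
      = fun ω => n1 ω * h x ω * X x ω := by intro x; funext ω; ring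
  have e5 : ∀ x : ι, (fun ω => n1 ω * (a x * h x ω))
      = fun ω => a x * (n1 ω * h x ω) := by intro x; funext ω; ring
  have e7 : ∀ x y : ι, (fun ω => h y ω * X y ω * (h x ω * X x ω))
      = fun ω => h y ω * h x ω * (X y ω * X x ω) := by intro x y; funext ω; ring
  have e8 : ∀ x y : ι, (fun ω => h y ω * X y ω * (a x * h x ω))
      = fun ω => a x * (h x ω * h y ω * X y ω) := by intro x y; funext ω; ring
  have e9 : ∀ i : ι, (fun ω => h i ω * X i ω * n2 ω)
      = fun ω => h i ω * n2 ω * X i ω := by intro i; funext ω; ring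
  have e10 : ∀ x : ι, (fun ω => n3 ω * (h x ω * X x ω))
      = fun ω => n3 ω * h x ω * X x ω := by intro x; funext ω; ring
  have e11 : ∀ x : ι, (fun ω => n3 ω * (a x * h x ω))
      = fun ω => a x * (n3 ω * h x ω) := by intro x; funext ω; ring
  -- group 1
  have ht1 : ∀ x ∈ N₁, ∀ y ∈ N₁, Integrable (fun ω => a y * h y ω * h x ω * X x ω) μ := by
    intro x hx y hy
    rw [e1]
    exact ((ThhX y x (memU1 y hy) (memU1 x hx)).1).const_mul _
  have hi1 : ∀ x ∈ N₁, Integrable (fun ω => ∑ y ∈ N₁, a y * h y ω * h x ω * X x ω) μ :=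
    fun x hx => integrable_finset_sum _ (ht1 x hx)
  have I1 : Integrable (fun ω => ∑ x ∈ N₁, ∑ y ∈ N₁, a y * h y ω * h x ω * X x ω) μ :=
    integrable_finset_sum _ hi1
  have J1 : ∫ ω, (∑ x ∈ N₁, ∑ y ∈ N₁, a y * h y ω * h x ω * X x ω) ∂μ
      = ∑ x ∈ N₁, a x * (∫ ω, h x ω ^ 2 ∂μ) * ∫ ω, X x ω ∂μ := by
    rw [integral_finset_sum _ hi1]
    refine Finset.sum_congr rfl fun x hx => ?_
    rw [integral_finset_sum _ (ht1 x hx)]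
    have hoff : ∀ y ∈ N₁, y ≠ x → ∫ ω, a y * h y ω * h x ω * X x ω ∂μ = 0 := by
      intro y hy hyx
      rw [e1, integral_const_mul, (ThhX y x (memU1 y hy) (memU1 x hx)).2,
        hhZero y x (memU1 y hy) (memU1 x hx) hyx, zero_mul, mul_zero]
    rw [Finset.sum_eq_single_of_mem x hx hoff, e1, integral_const_mul,
      (ThhX x x (memU1 x hx) (memU1 x hx)).2]
    have esq : (fun ω => h x ω * h x ω) = fun ω => h x ω ^ 2 := by funext ω; ring
    rw [esq]; ring
  -- group 2
  have ht2 : ∀ x ∈ N₂, ∀ y ∈ N₁, Integrable (fun ω => a y * h y ω * (a x * h x ω)) μ := by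
    intro x hx y hy
    rw [e2]
    exact (l2_mul_int (hL2 y (memU1 y hy)) (hL2 x (memU2 x hx))).const_mul _
  have hi2 : ∀ x ∈ N₂, Integrable (fun ω => ∑ y ∈ N₁, a y * h y ω * (a x * h x ω)) μ :=
    fun x hx => integrable_finset_sum _ (ht2 x hx)
  have I2 : Integrable (fun ω => ∑ x ∈ N₂, ∑ y ∈ N₁, a y * h y ω * (a x * h x ω)) μ :=
    integrable_finset_sum _ hi2
  have J2 : ∫ ω, (∑ x ∈ N₂, ∑ y ∈ N₁, a y * h y ω * (a x * h x ω)) ∂μ = 0 := by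
    rw [integral_finset_sum _ hi2]
    refine Finset.sum_eq_zero fun x hx => ?_
    rw [integral_finset_sum _ (ht2 x hx)]
    refine Finset.sum_eq_zero fun y hy => ?_
    rw [e2, integral_const_mul,
      hhZero y x (memU1 y hy) (memU2 x hx) (hne12 hy hx), mul_zero]
  -- group 3
  have ht3 : ∀ i ∈ N₁, Integrable (fun ω => a i * h i ω * n2 ω) μ := by
    intro i hi
    rw [e3]
    exact (l2_mul_int (hL2 i (memU1 i hi)) hn2L2).const_mul _
  have I3 : Integrable (fun ω => ∑ i ∈ N₁, a i * h i ω * n2 ω) μ :=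
    integrable_finset_sum _ ht3
  have J3 : ∫ ω, (∑ i ∈ N₁, a i * h i ω * n2 ω) ∂μ = 0 := by
    rw [integral_finset_sum _ ht3]
    refine Finset.sum_eq_zero fun i hi => ?_
    rw [e3, integral_const_mul, hhn2Zero i (memU1 i hi), mul_zero]
  -- group 4
  have ht4 : ∀ x ∈ N₁, Integrable (fun ω => n1 ω * (h x ω * X x ω)) μ := by
    intro x hx
    rw [e4]
    exact (Tn1hX x (memU1 x hx)).1
  have I4 : Integrable (fun ω => ∑ x ∈ N₁, n1 ω * (h x ω * X x ω)) μ :=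
    integrable_finset_sum _ ht4
  have J4 : ∫ ω, (∑ x ∈ N₁, n1 ω * (h x ω * X x ω)) ∂μ = 0 := by
    rw [integral_finset_sum _ ht4]
    refine Finset.sum_eq_zero fun x hx => ?_
    rw [e4, (Tn1hX x (memU1 x hx)).2, hn1hZero x (memU1 x hx), zero_mul]
  -- group 5
  have ht5 : ∀ x ∈ N₂, Integrable (fun ω => n1 ω * (a x * h x ω)) μ := by
    intro x hx
    rw [e5]
    exact (l2_mul_int hn1L2 (hL2 x (memU2 x hx))).const_mul _
  have I5 : Integrable (fun ω => ∑ x ∈ N₂, n1 ω * (a x * h x ω)) μ :=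
    integrable_finset_sum _ ht5
  have J5 : ∫ ω, (∑ x ∈ N₂, n1 ω * (a x * h x ω)) ∂μ = 0 := by
    rw [integral_finset_sum _ ht5]
    refine Finset.sum_eq_zero fun x hx => ?_
    rw [e5, integral_const_mul, hn1hZero x (memU2 x hx), mul_zero]
  -- group 6
  have I6 : Integrable (fun ω => n1 ω * n2 ω) μ := l2_mul_int hn1L2 hn2L2
  -- group 7
  have ht7 : ∀ x ∈ N₁, ∀ y ∈ N₂, Integrable (fun ω => h y ω * X y ω * (h x ω * X x ω)) μ := by
    intro x hx y hy
    rw [e7]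
    exact (ThhXX y x (memU2 y hy) (memU1 x hx)).1
  have hi7 : ∀ x ∈ N₁, Integrable (fun ω => ∑ y ∈ N₂, h y ω * X y ω * (h x ω * X x ω)) μ :=
    fun x hx => integrable_finset_sum _ (ht7 x hx)
  have I7 : Integrable (fun ω => ∑ x ∈ N₁, ∑ y ∈ N₂, h y ω * X y ω * (h x ω * X x ω)) μ :=
    integrable_finset_sum _ hi7
  have J7 : ∫ ω, (∑ x ∈ N₁, ∑ y ∈ N₂, h y ω * X y ω * (h x ω * X x ω)) ∂μ = 0 := by
    rw [integral_finset_sum _ hi7]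
    refine Finset.sum_eq_zero fun x hx => ?_
    rw [integral_finset_sum _ (ht7 x hx)]
    refine Finset.sum_eq_zero fun y hy => ?_
    rw [e7, (ThhXX y x (memU2 y hy) (memU1 x hx)).2,
      hhZero y x (memU2 y hy) (memU1 x hx) (fun e => hne12 hx hy e.symm), zero_mul]
  -- group 8
  have ht8 : ∀ x ∈ N₂, ∀ y ∈ N₂, Integrable (fun ω => h y ω * X y ω * (a x * h x ω)) μ := by
    intro x hx y hy
    rw [e8]
    exact ((ThhX x y (memU2 x hx) (memU2 y hy)).1).const_mul _
  have hi8 : ∀ x ∈ N₂, Integrable (fun ω => ∑ y ∈ N₂, h y ω * X y ω * (a x * h x ω)) μ :=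
    fun x hx => integrable_finset_sum _ (ht8 x hx)
  have I8 : Integrable (fun ω => ∑ x ∈ N₂, ∑ y ∈ N₂, h y ω * X y ω * (a x * h x ω)) μ :=
    integrable_finset_sum _ hi8
  have J8 : ∫ ω, (∑ x ∈ N₂, ∑ y ∈ N₂, h y ω * X y ω * (a x * h x ω)) ∂μ
      = ∑ x ∈ N₂, a x * (∫ ω, h x ω ^ 2 ∂μ) * ∫ ω, X x ω ∂μ := by
    rw [integral_finset_sum _ hi8]
    refine Finset.sum_congr rfl fun x hx => ?_
    rw [integral_finset_sum _ (ht8 x hx)]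
    have hoff : ∀ y ∈ N₂, y ≠ x → ∫ ω, h y ω * X y ω * (a x * h x ω) ∂μ = 0 := by
      intro y hy hyx
      rw [e8, integral_const_mul, (ThhX x y (memU2 x hx) (memU2 y hy)).2,
        hhZero x y (memU2 x hx) (memU2 y hy) (fun e => hyx e.symm), zero_mul, mul_zero]
    rw [Finset.sum_eq_single_of_mem x hx hoff, e8, integral_const_mul,
      (ThhX x x (memU2 x hx) (memU2 x hx)).2]
    have esq : (fun ω => h x ω * h x ω) = fun ω => h x ω ^ 2 := by funext ω; ring
    rw [esq]; ring
  -- group 9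
  have ht9 : ∀ i ∈ N₂, Integrable (fun ω => h i ω * X i ω * n2 ω) μ := by
    intro i hi
    rw [e9]
    exact (Thn2X i (memU2 i hi)).1
  have I9 : Integrable (fun ω => ∑ i ∈ N₂, h i ω * X i ω * n2 ω) μ :=
    integrable_finset_sum _ ht9
  have J9 : ∫ ω, (∑ i ∈ N₂, h i ω * X i ω * n2 ω) ∂μ = 0 := by
    rw [integral_finset_sum _ ht9]
    refine Finset.sum_eq_zero fun i hi => ?_
    rw [e9, (Thn2X i (memU2 i hi)).2, hhn2Zero i (memU2 i hi), zero_mul]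
  -- group 10
  have ht10 : ∀ x ∈ N₁, Integrable (fun ω => n3 ω * (h x ω * X x ω)) μ := by
    intro x hx
    rw [e10]
    exact (Tn3hX x (memU1 x hx)).1
  have I10 : Integrable (fun ω => ∑ x ∈ N₁, n3 ω * (h x ω * X x ω)) μ :=
    integrable_finset_sum _ ht10
  have J10 : ∫ ω, (∑ x ∈ N₁, n3 ω * (h x ω * X x ω)) ∂μ = 0 := by
    rw [integral_finset_sum _ ht10]
    refine Finset.sum_eq_zero fun x hx => ?_
    rw [e10, (Tn3hX x (memU1 x hx)).2, hn3hZero x (memU1 x hx), zero_mul]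
  -- group 11
  have ht11 : ∀ x ∈ N₂, Integrable (fun ω => n3 ω * (a x * h x ω)) μ := by
    intro x hx
    rw [e11]
    exact (l2_mul_int hn3L2 (hL2 x (memU2 x hx))).const_mul _
  have I11 : Integrable (fun ω => ∑ x ∈ N₂, n3 ω * (a x * h x ω)) μ :=
    integrable_finset_sum _ ht11
  have J11 : ∫ ω, (∑ x ∈ N₂, n3 ω * (a x * h x ω)) ∂μ = 0 := by
    rw [integral_finset_sum _ ht11]
    refine Finset.sum_eq_zero fun x hx => ?_
    rw [e11, integral_const_mul, hn3hZero x (memU2 x hx), mul_zero]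
  -- group 12
  have I12 : Integrable (fun ω => n3 ω * n2 ω) μ := l2_mul_int hn3L2 hn2L2
  -- pointwise expansion of the integrand
  have expand : (fun ω => ((∑ i ∈ N₁, a i * h i ω + n1 ω) *
            (∑ i ∈ N₁, h i ω * X i ω + ∑ j ∈ N₂, a j * h j ω + n2 ω) +
          (∑ j ∈ N₂, h j ω * X j ω + n3 ω) *
            (∑ i ∈ N₁, h i ω * X i ω + ∑ j ∈ N₂, a j * h j ω + n2 ω)))
      = fun ω =>
      (∑ x ∈ N₁, ∑ y ∈ N₁, a y * h y ω * h x ω * X x ω) +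
      (∑ x ∈ N₂, ∑ y ∈ N₁, a y * h y ω * (a x * h x ω)) +
      (∑ i ∈ N₁, a i * h i ω * n2 ω) +
      (∑ x ∈ N₁, n1 ω * (h x ω * X x ω)) +
      (∑ x ∈ N₂, n1 ω * (a x * h x ω)) +
      n1 ω * n2 ω +
      (∑ x ∈ N₁, ∑ y ∈ N₂, h y ω * X y ω * (h x ω * X x ω)) +
      (∑ x ∈ N₂, ∑ y ∈ N₂, h y ω * X y ω * (a x * h x ω)) +
      (∑ i ∈ N₂, h i ω * X i ω * n2 ω) +
      (∑ x ∈ N₁, n3 ω * (h x ω * X x ω)) +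
      (∑ x ∈ N₂, n3 ω * (a x * h x ω)) +
      n3 ω * n2 ω := by
    funext ω
    simp only [add_mul, mul_add, Finset.sum_mul, Finset.mul_sum, Finset.sum_add_distrib]
    ring_nf
    rw [show (∑ x ∈ N₁, n2 ω * a x * h x ω) = ∑ x ∈ N₁, a x * h x ω * n2 ω from
      Finset.sum_congr rfl fun _ _ => by ring]
    ring
  have P2 : Integrable (fun ω => (∑ x ∈ N₁, ∑ y ∈ N₁, a y * h y ω * h x ω * X x ω) + (∑ x ∈ N₂, ∑ y ∈ N₁, a y * h y ω * (a x * h x ω))) μ := I1.add I2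
  have P3 : Integrable (fun ω => (∑ x ∈ N₁, ∑ y ∈ N₁, a y * h y ω * h x ω * X x ω) + (∑ x ∈ N₂, ∑ y ∈ N₁, a y * h y ω * (a x * h x ω)) + (∑ i ∈ N₁, a i * h i ω * n2 ω)) μ := P2.add I3
  have P4 : Integrable (fun ω => (∑ x ∈ N₁, ∑ y ∈ N₁, a y * h y ω * h x ω * X x ω) + (∑ x ∈ N₂, ∑ y ∈ N₁, a y * h y ω * (a x * h x ω)) + (∑ i ∈ N₁, a i * h i ω * n2 ω) + (∑ x ∈ N₁, n1 ω * (h x ω * X x ω))) μ := P3.add I4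
  have P5 : Integrable (fun ω => (∑ x ∈ N₁, ∑ y ∈ N₁, a y * h y ω * h x ω * X x ω) + (∑ x ∈ N₂, ∑ y ∈ N₁, a y * h y ω * (a x * h x ω)) + (∑ i ∈ N₁, a i * h i ω * n2 ω) + (∑ x ∈ N₁, n1 ω * (h x ω * X x ω)) + (∑ x ∈ N₂, n1 ω * (a x * h x ω))) μ := P4.add I5
  have P6 : Integrable (fun ω => (∑ x ∈ N₁, ∑ y ∈ N₁, a y * h y ω * h x ω * X x ω) + (∑ x ∈ N₂, ∑ y ∈ N₁, a y * h y ω * (a x * h x ω)) + (∑ i ∈ N₁, a i * h i ω * n2 ω) + (∑ x ∈ N₁, n1 ω * (h x ω * X x ω)) + (∑ x ∈ N₂, n1 ω * (a x * h x ω)) + (n1 ω * n2 ω)) μ := P5.add I6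
  have P7 : Integrable (fun ω => (∑ x ∈ N₁, ∑ y ∈ N₁, a y * h y ω * h x ω * X x ω) + (∑ x ∈ N₂, ∑ y ∈ N₁, a y * h y ω * (a x * h x ω)) + (∑ i ∈ N₁, a i * h i ω * n2 ω) + (∑ x ∈ N₁, n1 ω * (h x ω * X x ω)) + (∑ x ∈ N₂, n1 ω * (a x * h x ω)) + (n1 ω * n2 ω) + (∑ x ∈ N₁, ∑ y ∈ N₂, h y ω * X y ω * (h x ω * X x ω))) μ := P6.add I7
  have P8 : Integrable (fun ω => (∑ x ∈ N₁, ∑ y ∈ N₁, a y * h y ω * h x ω * X x ω) + (∑ x ∈ N₂, ∑ y ∈ N₁, a y * h y ω * (a x * h x ω)) + (∑ i ∈ N₁, a i * h i ω * n2 ω) + (∑ x ∈ N₁, n1 ω * (h x ω * X x ω)) + (∑ x ∈ N₂, n1 ω * (a x * h x ω)) + (n1 ω * n2 ω) + (∑ x ∈ N₁, ∑ y ∈ N₂, h y ω * X y ω * (h x ω * X x ω)) + (∑ x ∈ N₂, ∑ y ∈ N₂, h y ω * X y ω * (a x * h x ω))) μ := P7.add I8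
  have P9 : Integrable (fun ω => (∑ x ∈ N₁, ∑ y ∈ N₁, a y * h y ω * h x ω * X x ω) + (∑ x ∈ N₂, ∑ y ∈ N₁, a y * h y ω * (a x * h x ω)) + (∑ i ∈ N₁, a i * h i ω * n2 ω) + (∑ x ∈ N₁, n1 ω * (h x ω * X x ω)) + (∑ x ∈ N₂, n1 ω * (a x * h x ω)) + (n1 ω * n2 ω) + (∑ x ∈ N₁, ∑ y ∈ N₂, h y ω * X y ω * (h x ω * X x ω)) + (∑ x ∈ N₂, ∑ y ∈ N₂, h y ω * X y ω * (a x * h x ω)) + (∑ i ∈ N₂, h i ω * X i ω * n2 ω)) μ := P8.add I9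
  have P10 : Integrable (fun ω => (∑ x ∈ N₁, ∑ y ∈ N₁, a y * h y ω * h x ω * X x ω) + (∑ x ∈ N₂, ∑ y ∈ N₁, a y * h y ω * (a x * h x ω)) + (∑ i ∈ N₁, a i * h i ω * n2 ω) + (∑ x ∈ N₁, n1 ω * (h x ω * X x ω)) + (∑ x ∈ N₂, n1 ω * (a x * h x ω)) + (n1 ω * n2 ω) + (∑ x ∈ N₁, ∑ y ∈ N₂, h y ω * X y ω * (h x ω * X x ω)) + (∑ x ∈ N₂, ∑ y ∈ N₂, h y ω * X y ω * (a x * h x ω)) + (∑ i ∈ N₂, h i ω * X i ω * n2 ω) + (∑ x ∈ N₁, n3 ω * (h x ω * X x ω))) μ := P9.add I10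
  have P11 : Integrable (fun ω => (∑ x ∈ N₁, ∑ y ∈ N₁, a y * h y ω * h x ω * X x ω) + (∑ x ∈ N₂, ∑ y ∈ N₁, a y * h y ω * (a x * h x ω)) + (∑ i ∈ N₁, a i * h i ω * n2 ω) + (∑ x ∈ N₁, n1 ω * (h x ω * X x ω)) + (∑ x ∈ N₂, n1 ω * (a x * h x ω)) + (n1 ω * n2 ω) + (∑ x ∈ N₁, ∑ y ∈ N₂, h y ω * X y ω * (h x ω * X x ω)) + (∑ x ∈ N₂, ∑ y ∈ N₂, h y ω * X y ω * (a x * h x ω)) + (∑ i ∈ N₂, h i ω * X i ω * n2 ω) + (∑ x ∈ N₁, n3 ω * (h x ω * X x ω)) + (∑ x ∈ N₂, n3 ω * (a x * h x ω))) μ := P10.add I11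
  rw [expand,
    integral_add P11 I12,
    integral_add P10 I11,
    integral_add P9 I10,
    integral_add P8 I9,
    integral_add P7 I8,
    integral_add P6 I7,
    integral_add P5 I6,
    integral_add P4 I5,
    integral_add P3 I4,
    integral_add P2 I3,
    integral_add I1 I2,
    J1, J2, J3, J4, J5, hn1n2Zero, J7, J8, J9, J10, J11, hn3n2Zero,
    Finset.sum_union hdisj]
  ring
end

section
/- Let Φ be a random vector in ℝ^d with ‖Φ‖ ≤ b₂ almost surely, and let X₁, …, X_N be real random variables with |X_i| ≤ 2Lγb₂ almost surely (as holds when X_i = f_i(θ + γΦ, ξ_i) − f_i(θ − γΦ, ξ_i) with each f_i(·, ξ) L-Lipschitz). Let h₁, …, h_N, n₁, n₂ be mutually independent zero-mean real random variables with E[n₁²] = σ₁², E[n₂²] = σ₂², and finite fourth moments for the h_i, such that (h₁, …, h_N, n₁, n₂) is independent of (Φ, X₁, …, X_N). Then for any nonnegative reals a₁, …, a_N, E[‖Φ (∑_i a_i h_i + n₁)(∑_i h_i X_i + n₂)‖²] ≤ b₂² [ σ₁²σ₂² + 4b₂²L²γ²σ₁² ∑_i E[h_i²] + σ₂² ∑_i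 a_i² E[h_i²] + 4b₂²L²γ² ( ∑_i ∑_j a_i² E[h_i²] E[h_j²] + 2 ∑_i ∑_j a_i a_j E[h_i²] E[h_j²] + ∑_i a_i² E[h_i⁴] ) ]. -/
open MeasureTheory ProbabilityTheory
open MeasureTheory ProbabilityTheory Finset
open scoped ENNReal NNReal

section helpers
variable {Ω ι : Type*} [MeasurableSpace Ω] {μ : Measure Ω}


lemma aux_indep_pow [DecidableEq ι]
    {g : ι → Ω → ℝ} (hg : ∀ i, Measurable (g i))
    (hind : iIndepFun g μ)
    (ψ : ι → ℝ → ℝ) (hψ : ∀ i, Measurable (ψ i))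
    {s : Finset ι} {j : ι} (hj : j ∉ s) :
    IndepFun (fun ω => ψ j (g j ω)) (fun ω => ∏ i ∈ s, ψ i (g i ω)) μ := by
  have h1 := hind.indepFun_finset {j} s (Finset.disjoint_singleton_left.mpr hj) hg
  have h2 := h1.comp (φ := fun v : (({j} : Finset ι) : Type _) → ℝ =>
      ψ j (v ⟨j, Finset.mem_singleton_self j⟩))
    (ψ := fun v : ((s : Finset ι) : Type _) → ℝ => ∏ i, ψ i.1 (v i))
    ((hψ j).comp' (measurable_pi_apply _))
    (Finset.measurable_prod Finset.univ (fun i _ => (hψ i.1).comp' (measurable_pi_apply i)))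
  have e1 : ((fun v : (({j} : Finset ι) : Type _) → ℝ =>
      ψ j (v ⟨j, Finset.mem_singleton_self j⟩)) ∘ (fun a (i : ({j} : Finset ι)) => g i a))
      = fun ω => ψ j (g j ω) := rfl
  have e2 : ((fun v : ((s : Finset ι) : Type _) → ℝ => ∏ i, ψ i.1 (v i)) ∘
      (fun a (i : (s : Finset ι)) => g i a)) = fun ω => ∏ i ∈ s, ψ i (g i ω) := by
    funext ω
    simp only [Function.comp]
    exact Finset.prod_coe_sort s fun i => ψ i (g i ω)
  rwa [e1, e2] at h2

lemma aux_integral_prod_pow [IsProbabilityMeasure μ] [DecidableEq ι]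
    {g : ι → Ω → ℝ} (hg : ∀ i, Measurable (g i))
    (hind : iIndepFun g μ)
    (m : ι → ℕ) (s : Finset ι)
    (hint : ∀ i ∈ s, Integrable (fun ω => g i ω ^ m i) μ) :
    Integrable (fun ω => ∏ i ∈ s, g i ω ^ m i) μ ∧
      ∫ ω, ∏ i ∈ s, g i ω ^ m i ∂μ = ∏ i ∈ s, ∫ ω, g i ω ^ m i ∂μ := by
  classical
  induction s using Finset.induction_on with
  | empty => simp
  | @insert j s hj ih =>
    obtain ⟨ih1, ih2⟩ := ih (fun i hi => hint i (Finset.mem_insert_of_mem hi))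
    have hdep : IndepFun (fun ω => g j ω ^ m j) (fun ω => ∏ i ∈ s, g i ω ^ m i) μ :=
      aux_indep_pow hg hind (fun i x => x ^ m i) (fun i => measurable_id.pow_const (m i)) hj
    have hji := hint j (Finset.mem_insert_self j s)
    constructor
    · simp only [Finset.prod_insert hj]
      exact hdep.integrable_mul hji ih1
    · simp only [Finset.prod_insert hj]
      have := hdep.integral_fun_mul_eq_mul_integral hji.aestronglyMeasurable ih1.aestronglyMeasurable
      simpa [ih2] using this


lemma aux_pow_integrable [IsFiniteMeasure μ] {f : Ω → ℝ} (hf : Measurable f)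
    {p : ℕ} (hfp : MemLp f p μ) {n : ℕ} (hn : n ≤ p) (hp : p ≠ 0) :
    Integrable (fun ω => f ω ^ n) μ := by
  rcases Nat.eq_zero_or_pos n with h0 | hpos
  · simp [h0]
  have hfn : MemLp f n μ := hfp.mono_exponent (by exact_mod_cast hn)
  have := hfn.integrable_norm_rpow (by exact_mod_cast hpos.ne') (by simp)
  have h2 : Integrable (fun ω => |f ω| ^ n) μ := by
    convert this using 2 with ω
    rw [Real.norm_eq_abs, ← Real.rpow_natCast]
    simp
  refine h2.mono' (hf.pow_const n).aestronglyMeasurable ?_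
  filter_upwards with ω
  rw [Real.norm_eq_abs, abs_pow]



def quadMult [DecidableEq ι] (s t u v x : ι) : ℕ :=
  (if x = s then 1 else 0) + (if x = t then 1 else 0) +
  (if x = u then 1 else 0) + (if x = v then 1 else 0)

lemma quadMult_le_four [DecidableEq ι] (s t u v x : ι) : quadMult s t u v x ≤ 4 := by
  unfold quadMult; split <;> split <;> split <;> split <;> omega

omit [MeasurableSpace Ω] in
lemma aux_monomial_eq [Fintype ι] [DecidableEq ι] (g : ι → Ω → ℝ) (s t u v : ι) (ω : Ω) :
    g s ω * g t ω * g u ω * g v ω = ∏ x, g x ω ^ quadMult s t u v x := by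
  have key : ∀ w : ι, (∏ x, g x ω ^ (if x = w then 1 else 0)) = g w ω := by
    intro w
    rw [Finset.prod_eq_single w (fun b _ hb => by simp [hb]) (by simp)]
    simp
  simp only [quadMult, pow_add, Finset.prod_mul_distrib, key]

-- test of the quad moment evaluation, with the prod formula assumed (axiom-free later)
lemma aux_quad_eval [Fintype ι] [DecidableEq ι] [IsProbabilityMeasure μ]
    {g : ι → Ω → ℝ}
    (hmean : ∀ x, ∫ ω, g x ω ∂μ = 0)
    (s t u v : ι) :
    ∏ x, ∫ ω, g x ω ^ quadMult s t u v x ∂μ =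
      (if s = t ∧ u = v then (∫ ω, g s ω ^ 2 ∂μ) * (∫ ω, g u ω ^ 2 ∂μ) else 0)
    + (if s = u ∧ t = v then (∫ ω, g s ω ^ 2 ∂μ) * (∫ ω, g t ω ^ 2 ∂μ) else 0)
    + (if s = v ∧ t = u then (∫ ω, g s ω ^ 2 ∂μ) * (∫ ω, g t ω ^ 2 ∂μ) else 0)
    + (if s = t ∧ s = u ∧ s = v then (∫ ω, g s ω ^ 4 ∂μ) - 3 * (∫ ω, g s ω ^ 2 ∂μ)^2
        else 0) := by
  have pair_prod : ∀ (M : ι → ℝ) (p q : ι), p ≠ q → (∀ x, x ≠ p → x ≠ q → M x = 1) →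
      ∏ x, M x = M p * M q := by
    intro M p q hpq hM
    rw [← Finset.prod_pair hpq]
    refine (Finset.prod_subset (Finset.subset_univ _) ?_).symm
    intro x _ hx
    simp only [Finset.mem_insert, Finset.mem_singleton, not_or] at hx
    exact hM x hx.1 hx.2
  by_cases h1 : s = t ∧ s = u ∧ s = v
  · obtain ⟨rfl, rfl, rfl⟩ := h1
    rw [Finset.prod_eq_single s (fun b _ hb => by simp [quadMult, hb]) (by simp)]
    have e1 : quadMult s s s s s = 4 := by simp [quadMult]
    rw [e1]
    simp only [and_self, if_true, eq_self_iff_true, ite_true]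
    ring
  · by_cases h2 : s = t ∧ u = v
    · obtain ⟨rfl, rfl⟩ := h2
      have hsu : s ≠ u := fun he => h1 ⟨rfl, he, he⟩
      rw [pair_prod (fun x => ∫ ω, g x ω ^ quadMult s s u u x ∂μ) s u hsu
        (fun x hx1 hx2 => by simp [quadMult, hx1, hx2])]
      have e1 : quadMult s s u u s = 2 := by simp [quadMult, hsu]
      have e2 : quadMult s s u u u = 2 := by simp [quadMult, Ne.symm hsu]
      simp only [e1, e2]
      simp [hsu]
    · by_cases h3 : s = u ∧ t = v
      · obtain ⟨rfl, rfl⟩ := h3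
        have hst : s ≠ t := fun he => h1 ⟨he, rfl, he⟩
        rw [pair_prod (fun x => ∫ ω, g x ω ^ quadMult s t s t x ∂μ) s t hst
          (fun x hx1 hx2 => by simp [quadMult, hx1, hx2])]
        have e1 : quadMult s t s t s = 2 := by simp [quadMult, hst]
        have e2 : quadMult s t s t t = 2 := by simp [quadMult, Ne.symm hst]
        simp only [e1, e2]
        simp [hst]
      · by_cases h4 : s = v ∧ t = u
        · obtain ⟨rfl, rfl⟩ := h4
          have hst : s ≠ t := fun he => h1 ⟨he, he, rfl⟩
          rw [pair_prod (fun x => ∫ ω, g x ω ^ quadMult s t t s x ∂μ) s t hst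
            (fun x hx1 hx2 => by simp [quadMult, hx1, hx2])]
          have e1 : quadMult s t t s s = 2 := by simp [quadMult, hst]
          have e2 : quadMult s t t s t = 2 := by simp [quadMult, Ne.symm hst]
          simp only [e1, e2]
          simp [hst]
        · rw [if_neg h2, if_neg h3, if_neg h4, if_neg h1, add_zero, add_zero, add_zero]
          have hone : quadMult s t u v s = 1 ∨ quadMult s t u v t = 1 ∨
              quadMult s t u v u = 1 ∨ quadMult s t u v v = 1 := by
            by_cases hst : s = t
            · obtain rfl := hst
              have huv : u ≠ v := fun he => h2 ⟨rfl, he⟩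
              by_cases hsu : s = u
              · obtain rfl := hsu
                have hsv : s ≠ v := fun he => h3 ⟨rfl, he⟩
                exact Or.inr (Or.inr (Or.inr (by simp [quadMult, Ne.symm hsv])))
              · by_cases hsv : s = v
                · obtain rfl := hsv
                  exact Or.inr (Or.inr (Or.inl (by simp [quadMult, Ne.symm hsu, huv])))
                · exact Or.inr (Or.inr (Or.inl (by simp [quadMult, Ne.symm hsu, huv])))
            · by_cases hsu : s = u
              · obtain rfl := hsu
                by_cases hsv : s = v
                · obtain rfl := hsv
                  exact Or.inr (Or.inl (by simp [quadMult, Ne.symm hst]))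
                · have htv : t ≠ v := fun he => h3 ⟨rfl, he⟩
                  exact Or.inr (Or.inl (by simp [quadMult, Ne.symm hst, htv]))
              · by_cases hsv : s = v
                · obtain rfl := hsv
                  have htu : t ≠ u := fun he => h4 ⟨rfl, he⟩
                  exact Or.inr (Or.inl (by simp [quadMult, Ne.symm hst, htu]))
                · exact Or.inl (by simp [quadMult, hst, hsu, hsv])
          have final : ∀ x₀ : ι, quadMult s t u v x₀ = 1 →
              (∏ x, ∫ ω, g x ω ^ quadMult s t u v x ∂μ) = 0 := by
            intro x₀ hx
            refine Finset.prod_eq_zero (Finset.mem_univ x₀) ?_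
            rw [hx]
            simpa using hmean x₀
          obtain hx | hx | hx | hx := hone
          exacts [final _ hx, final _ hx, final _ hx, final _ hx]

end helpers

section alg
variable {ι : Type*} [Fintype ι] [DecidableEq ι]


lemma aux_sum_eval (α β E2 E4 : ι → ℝ) :
    ∑ p : ι × ι, ∑ q : ι × ι, (α p.1 * β p.2 * (α q.1 * β q.2)) *
      ((if p.1 = p.2 ∧ q.1 = q.2 then E2 p.1 * E2 q.1 else 0)
      + (if p.1 = q.1 ∧ p.2 = q.2 then E2 p.1 * E2 p.2 else 0)
      + (if p.1 = q.2 ∧ p.2 = q.1 then E2 p.1 * E2 p.2 else 0)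
      + (if p.1 = p.2 ∧ p.1 = q.1 ∧ p.1 = q.2 then E4 p.1 - 3 * E2 p.1 ^ 2 else 0)) =
    (∑ i, α i ^ 2 * E2 i) * (∑ i, β i ^ 2 * E2 i) + 2 * (∑ i, α i * β i * E2 i) ^ 2
      + ∑ i, α i ^ 2 * β i ^ 2 * (E4 i - 3 * E2 i ^ 2) := by
  have diag : ∑ p : ι × ι, (if p.1 = p.2 then α p.1 * β p.2 * E2 p.1 else 0)
      = ∑ i, α i * β i * E2 i := by
    rw [Fintype.sum_prod_type]
    refine Finset.sum_congr rfl fun i _ => ?_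
    simp [Finset.sum_ite_eq]
  have hT1 : ∑ p : ι × ι, ∑ q : ι × ι, (α p.1 * β p.2 * (α q.1 * β q.2)) *
      (if p.1 = p.2 ∧ q.1 = q.2 then E2 p.1 * E2 q.1 else 0)
      = (∑ i, α i * β i * E2 i) ^ 2 := by
    have e : ∀ p q : ι × ι, (α p.1 * β p.2 * (α q.1 * β q.2)) *
        (if p.1 = p.2 ∧ q.1 = q.2 then E2 p.1 * E2 q.1 else 0)
        = (if p.1 = p.2 then α p.1 * β p.2 * E2 p.1 else 0) *
          (if q.1 = q.2 then α q.1 * β q.2 * E2 q.1 else 0) := by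
      intro p q
      by_cases h : p.1 = p.2 <;> by_cases h' : q.1 = q.2 <;> simp [h, h'] <;> ring
    simp only [e, ← Finset.sum_mul, ← Finset.mul_sum]
    rw [diag, sq]
  have hT2 : ∑ p : ι × ι, ∑ q : ι × ι, (α p.1 * β p.2 * (α q.1 * β q.2)) *
      (if p.1 = q.1 ∧ p.2 = q.2 then E2 p.1 * E2 p.2 else 0)
      = (∑ i, α i ^ 2 * E2 i) * (∑ i, β i ^ 2 * E2 i) := by
    have e : ∀ p q : ι × ι, (α p.1 * β p.2 * (α q.1 * β q.2)) *
        (if p.1 = q.1 ∧ p.2 = q.2 then E2 p.1 * E2 p.2 else 0)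
        = (if q = p then α p.1 ^ 2 * E2 p.1 * (β p.2 ^ 2 * E2 p.2) else 0) := by
      intro p q
      by_cases h : q = p
      · subst h
        simp
        ring
      · have h2 : ¬(p.1 = q.1 ∧ p.2 = q.2) := fun hc => h (Prod.ext hc.1.symm hc.2.symm)
        simp [h, h2]
    simp only [e, Finset.sum_ite_eq', Finset.mem_univ, if_true]
    rw [Finset.sum_mul_sum]
    exact Fintype.sum_prod_type (f := fun x : ι × ι => α x.1 ^ 2 * E2 x.1 * (β x.2 ^ 2 * E2 x.2))
  have hT3 : ∑ p : ι × ι, ∑ q : ι × ι, (α p.1 * β p.2 * (α q.1 * β q.2)) *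
      (if p.1 = q.2 ∧ p.2 = q.1 then E2 p.1 * E2 p.2 else 0)
      = (∑ i, α i * β i * E2 i) ^ 2 := by
    have e : ∀ p q : ι × ι, (α p.1 * β p.2 * (α q.1 * β q.2)) *
        (if p.1 = q.2 ∧ p.2 = q.1 then E2 p.1 * E2 p.2 else 0)
        = (if q = (p.2, p.1) then α p.1 * β p.1 * E2 p.1 * (α p.2 * β p.2 * E2 p.2) else 0) := by
      intro p q
      by_cases h : q = (p.2, p.1)
      · subst h
        simp
        ring
      · have h2 : ¬(p.1 = q.2 ∧ p.2 = q.1) := fun hc => h (Prod.ext hc.2.symm hc.1.symm)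
        simp [h, h2]
    simp only [e, Finset.sum_ite_eq', Finset.mem_univ, if_true]
    rw [sq, Finset.sum_mul_sum]
    exact Fintype.sum_prod_type (f := fun x : ι × ι => α x.1 * β x.1 * E2 x.1 * (α x.2 * β x.2 * E2 x.2))
  have hT4 : ∑ p : ι × ι, ∑ q : ι × ι, (α p.1 * β p.2 * (α q.1 * β q.2)) *
      (if p.1 = p.2 ∧ p.1 = q.1 ∧ p.1 = q.2 then E4 p.1 - 3 * E2 p.1 ^ 2 else 0)
      = ∑ i, α i ^ 2 * β i ^ 2 * (E4 i - 3 * E2 i ^ 2) := by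
    have e : ∀ p q : ι × ι, (α p.1 * β p.2 * (α q.1 * β q.2)) *
        (if p.1 = p.2 ∧ p.1 = q.1 ∧ p.1 = q.2 then E4 p.1 - 3 * E2 p.1 ^ 2 else 0)
        = (if q = (p.1, p.1) then
            (if p.2 = p.1 then α p.1 ^ 2 * β p.1 ^ 2 * (E4 p.1 - 3 * E2 p.1 ^ 2) else 0)
          else 0) := by
      intro p q
      by_cases h : q = (p.1, p.1)
      · subst h
        by_cases h2 : p.2 = p.1
        · rw [if_pos (show p.1 = p.2 ∧ p.1 = p.1 ∧ p.1 = p.1 from ⟨h2.symm, rfl, rfl⟩),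
            if_pos rfl, if_pos h2, h2]
          ring
        · have h4 : ¬ p.1 = p.2 := fun hc => h2 hc.symm
          simp [h2, h4]
      · have h3 : ¬(p.1 = p.2 ∧ p.1 = q.1 ∧ p.1 = q.2) := fun hc =>
          h (Prod.ext hc.2.1.symm hc.2.2.symm)
        simp [h, h3]
    simp only [e, Finset.sum_ite_eq', Finset.mem_univ, if_true]
    rw [Fintype.sum_prod_type]
    refine Finset.sum_congr rfl fun i _ => ?_
    simp [Finset.sum_ite_eq']
  simp only [mul_add, Finset.sum_add_distrib, hT1, hT2, hT3, hT4]
  ring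

end alg
section bound

lemma aux_bound {N : ℕ} (a x E F : Fin N → ℝ) (c s1 s2 : ℝ)
    (ha : ∀ i, 0 ≤ a i) (hx : ∀ i, |x i| ≤ c)
    (hE : ∀ i, 0 ≤ E i) (hF : ∀ i, 0 ≤ F i) (hs1 : 0 ≤ s1) (hs2 : 0 ≤ s2) :
    (∑ i, a i ^ 2 * E i + s1) * (∑ i, x i ^ 2 * E i + s2)
      + 2 * (∑ i, a i * x i * E i) ^ 2
      + ∑ i, a i ^ 2 * x i ^ 2 * (F i - 3 * E i ^ 2)
    ≤ s1 * s2 + c ^ 2 * s1 * ∑ i, E i + s2 * ∑ i, a i ^ 2 * E i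
      + c ^ 2 * ((∑ i, a i ^ 2 * E i) * (∑ i, E i) + 2 * (∑ i, a i * E i) ^ 2
        + ∑ i, a i ^ 2 * F i) := by
  have hx2 : ∀ i, x i ^ 2 ≤ c ^ 2 := fun i => sq_le_sq' (abs_le.mp (hx i)).1 (abs_le.mp (hx i)).2
  have hXs : ∑ i, x i ^ 2 * E i ≤ c ^ 2 * ∑ i, E i := by
    rw [Finset.mul_sum]
    exact Finset.sum_le_sum fun i _ => mul_le_mul_of_nonneg_right (hx2 i) (hE i)
  have hSA : (0:ℝ) ≤ ∑ i, a i ^ 2 * E i :=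
    Finset.sum_nonneg fun i _ => mul_nonneg (sq_nonneg _) (hE i)
  have hSX : (0:ℝ) ≤ ∑ i, x i ^ 2 * E i :=
    Finset.sum_nonneg fun i _ => mul_nonneg (sq_nonneg _) (hE i)
  have hP : (∑ i, a i * x i * E i) ^ 2 ≤ c ^ 2 * (∑ i, a i * E i) ^ 2 := by
    have habs : |∑ i, a i * x i * E i| ≤ c * ∑ i, a i * E i := by
      calc |∑ i, a i * x i * E i| ≤ ∑ i, |a i * x i * E i| :=
            Finset.abs_sum_le_sum_abs _ _
        _ ≤ ∑ i, c * (a i * E i) := by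
            refine Finset.sum_le_sum fun i _ => ?_
            rw [abs_mul, abs_mul, abs_of_nonneg (ha i), abs_of_nonneg (hE i)]
            have h1 : a i * |x i| ≤ a i * c := mul_le_mul_of_nonneg_left (hx i) (ha i)
            nlinarith [hE i]
        _ = c * ∑ i, a i * E i := by rw [Finset.mul_sum]
    calc (∑ i, a i * x i * E i) ^ 2 = |∑ i, a i * x i * E i| ^ 2 := (sq_abs _).symm
      _ ≤ (c * ∑ i, a i * E i) ^ 2 := pow_le_pow_left₀ (abs_nonneg _) habs 2
      _ = c ^ 2 * (∑ i, a i * E i) ^ 2 := by ring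
  have hD : ∑ i, a i ^ 2 * x i ^ 2 * (F i - 3 * E i ^ 2) ≤ c ^ 2 * ∑ i, a i ^ 2 * F i := by
    rw [Finset.mul_sum]
    refine Finset.sum_le_sum fun i _ => ?_
    nlinarith [mul_le_mul_of_nonneg_right (hx2 i) (mul_nonneg (sq_nonneg (a i)) (hF i)),
      mul_nonneg (mul_nonneg (sq_nonneg (a i)) (sq_nonneg (x i))) (sq_nonneg (E i))]
  have hc2 : (0:ℝ) ≤ c ^ 2 := sq_nonneg c
  nlinarith [mul_le_mul_of_nonneg_left hXs hSA, mul_le_mul_of_nonneg_left hXs hs1,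
    hP, hD, mul_nonneg hs2 hSA]

end bound
section core
open Sum

lemma aux_core {N : ℕ} {Ω : Type*} [MeasurableSpace Ω] {μ : Measure Ω} [IsProbabilityMeasure μ]
    (h : Fin N → Ω → ℝ) (n1 n2 : Ω → ℝ)
    (hmeas : ∀ i, Measurable (h i)) (hn1 : Measurable n1) (hn2 : Measurable n2)
    (hL4 : ∀ i, MemLp (h i) 4 μ) (hn1L2 : MemLp n1 2 μ) (hn2L2 : MemLp n2 2 μ)
    (hmean : ∀ i, ∫ ω, h i ω ∂μ = 0)
    (hn1mean : ∫ ω, n1 ω ∂μ = 0) (hn2mean : ∫ ω, n2 ω ∂μ = 0)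
    (hIndep : iIndepFun (Sum.elim h ![n1, n2]) μ)
    (a x : Fin N → ℝ) :
    Integrable (fun ω => ((∑ i, a i * h i ω + n1 ω) * (∑ i, h i ω * x i + n2 ω)) ^ 2) μ ∧
    ∫ ω, ((∑ i, a i * h i ω + n1 ω) * (∑ i, h i ω * x i + n2 ω)) ^ 2 ∂μ =
      (∑ i, a i ^ 2 * ∫ ω, h i ω ^ 2 ∂μ + ∫ ω, n1 ω ^ 2 ∂μ) *
        (∑ i, x i ^ 2 * ∫ ω, h i ω ^ 2 ∂μ + ∫ ω, n2 ω ^ 2 ∂μ)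
      + 2 * (∑ i, a i * x i * ∫ ω, h i ω ^ 2 ∂μ) ^ 2
      + ∑ i, a i ^ 2 * x i ^ 2 * ((∫ ω, h i ω ^ 4 ∂μ) - 3 * (∫ ω, h i ω ^ 2 ∂μ) ^ 2) := by
  classical
  set ι₀ := (Fin N ⊕ Fin 2)
  set g : ι₀ → Ω → ℝ := Sum.elim h ![n1, n2] with hg_def
  set α : ι₀ → ℝ := Sum.elim a ![1, 0] with hα_def
  set β : ι₀ → ℝ := Sum.elim x ![0, 1] with hβ_def
  have hgmeas : ∀ z : ι₀, Measurable (g z) := by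
    rintro (i | j)
    · exact hmeas i
    · fin_cases j
      · simpa [hg_def] using hn1
      · simpa [hg_def] using hn2
  have hgmean : ∀ z : ι₀, ∫ ω, g z ω ∂μ = 0 := by
    rintro (i | j)
    · exact hmean i
    · fin_cases j
      · simpa [hg_def] using hn1mean
      · simpa [hg_def] using hn2mean
  have hg_inl : ∀ i, g (inl i) = h i := fun i => rfl
  have hg_inr0 : g (inr 0) = n1 := rfl
  have hg_inr1 : g (inr 1) = n2 := rfl
  -- rewrite A and B as sums over ι₀
  have hA : ∀ ω, (∑ i, a i * h i ω + n1 ω) = ∑ z : ι₀, α z * g z ω := by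
    intro ω
    rw [Fintype.sum_sum_type, Fin.sum_univ_two]
    simp [hα_def, hg_def]
  have hB : ∀ ω, (∑ i, h i ω * x i + n2 ω) = ∑ z : ι₀, β z * g z ω := by
    intro ω
    rw [Fintype.sum_sum_type, Fin.sum_univ_two]
    simp [hβ_def, hg_def, mul_comm]
  -- pointwise expansion
  have expand : ∀ ω, ((∑ z : ι₀, α z * g z ω) * (∑ z : ι₀, β z * g z ω)) ^ 2 =
      ∑ p : ι₀ × ι₀, ∑ q : ι₀ × ι₀, (α p.1 * β p.2 * (α q.1 * β q.2)) *
        (g p.1 ω * g p.2 ω * g q.1 ω * g q.2 ω) := by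
    intro ω
    have h1 : (∑ z : ι₀, α z * g z ω) * (∑ z : ι₀, β z * g z ω)
        = ∑ p : ι₀ × ι₀, (α p.1 * g p.1 ω) * (β p.2 * g p.2 ω) := by
      rw [Finset.sum_mul_sum]
      exact (Fintype.sum_prod_type
        (f := fun p : ι₀ × ι₀ => (α p.1 * g p.1 ω) * (β p.2 * g p.2 ω))).symm
    rw [sq, h1, Finset.sum_mul_sum]
    exact Finset.sum_congr rfl fun p _ => Finset.sum_congr rfl fun q _ => by ring
  -- per-term integrability and value
  have hL4' : ∀ i, MemLp (h i) ((4 : ℕ) : ℝ≥0∞) μ := by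
    intro i
    rw [Nat.cast_ofNat]
    exact hL4 i
  have hn1L2' : MemLp n1 ((2 : ℕ) : ℝ≥0∞) μ := by rw [Nat.cast_ofNat]; exact hn1L2
  have hn2L2' : MemLp n2 ((2 : ℕ) : ℝ≥0∞) μ := by rw [Nat.cast_ofNat]; exact hn2L2
  have key : ∀ p q : ι₀ × ι₀,
      Integrable (fun ω => (α p.1 * β p.2 * (α q.1 * β q.2)) *
        (g p.1 ω * g p.2 ω * g q.1 ω * g q.2 ω)) μ ∧
      ∫ ω, (α p.1 * β p.2 * (α q.1 * β q.2)) *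
        (g p.1 ω * g p.2 ω * g q.1 ω * g q.2 ω) ∂μ =
      (α p.1 * β p.2 * (α q.1 * β q.2)) *
        ((if p.1 = p.2 ∧ q.1 = q.2 then (∫ ω, g p.1 ω ^ 2 ∂μ) * (∫ ω, g q.1 ω ^ 2 ∂μ) else 0)
        + (if p.1 = q.1 ∧ p.2 = q.2 then (∫ ω, g p.1 ω ^ 2 ∂μ) * (∫ ω, g p.2 ω ^ 2 ∂μ) else 0)
        + (if p.1 = q.2 ∧ p.2 = q.1 then (∫ ω, g p.1 ω ^ 2 ∂μ) * (∫ ω, g p.2 ω ^ 2 ∂μ) else 0)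
        + (if p.1 = p.2 ∧ p.1 = q.1 ∧ p.1 = q.2 then
            (∫ ω, g p.1 ω ^ 4 ∂μ) - 3 * (∫ ω, g p.1 ω ^ 2 ∂μ) ^ 2 else 0)) := by
    intro p q
    by_cases hw : α p.1 * β p.2 * (α q.1 * β q.2) = 0
    · constructor
      · simpa [hw] using (integrable_zero Ω ℝ μ)
      · simp [hw]
    · -- integrability of each power
      have hβ2 : β p.2 ≠ 0 := fun h0 => hw (by rw [h0]; ring)
      have hβ4 : β q.2 ≠ 0 := fun h0 => hw (by rw [h0]; ring)
      have hα1 : α p.1 ≠ 0 := fun h0 => hw (by rw [h0]; ring)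
      have hα3 : α q.1 ≠ 0 := fun h0 => hw (by rw [h0]; ring)
      have hp2 : (inr 0 : ι₀) ≠ p.2 := fun he => hβ2 (by rw [← he]; simp [hβ_def])
      have hq2 : (inr 0 : ι₀) ≠ q.2 := fun he => hβ4 (by rw [← he]; simp [hβ_def])
      have hp1 : (inr 1 : ι₀) ≠ p.1 := fun he => hα1 (by rw [← he]; simp [hα_def])
      have hq1 : (inr 1 : ι₀) ≠ q.1 := fun he => hα3 (by rw [← he]; simp [hα_def])
      have hint : ∀ z : ι₀, Integrable (fun ω => g z ω ^ quadMult p.1 p.2 q.1 q.2 z) μ := by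
        rintro (i | j)
        · exact aux_pow_integrable (hmeas i) (hL4' i) (quadMult_le_four _ _ _ _ _) (by norm_num)
        · fin_cases j
          · have hle : quadMult p.1 p.2 q.1 q.2 (inr 0) ≤ 2 := by
              simp only [quadMult, if_neg hp2, if_neg hq2]
              split_ifs <;> omega
            exact aux_pow_integrable hn1 hn1L2' hle (by norm_num)
          · have hle : quadMult p.1 p.2 q.1 q.2 (inr 1) ≤ 2 := by
              simp only [quadMult, if_neg hp1, if_neg hq1]
              split_ifs <;> omega
            exact aux_pow_integrable hn2 hn2L2' hle (by norm_num)
      obtain ⟨hIprod, hVprod⟩ := aux_integral_prod_pow hgmeas hIndep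
        (quadMult p.1 p.2 q.1 q.2) Finset.univ (fun z _ => hint z)
      have em : (fun ω => g p.1 ω * g p.2 ω * g q.1 ω * g q.2 ω)
          = fun ω => ∏ z, g z ω ^ quadMult p.1 p.2 q.1 q.2 z :=
        funext (aux_monomial_eq g p.1 p.2 q.1 q.2)
      have hImono : Integrable (fun ω => g p.1 ω * g p.2 ω * g q.1 ω * g q.2 ω) μ := by
        rw [em]; exact hIprod
      constructor
      · exact hImono.const_mul _
      · rw [integral_const_mul]
        congr 1
        calc ∫ ω, g p.1 ω * g p.2 ω * g q.1 ω * g q.2 ω ∂μ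
            = ∫ ω, ∏ z, g z ω ^ quadMult p.1 p.2 q.1 q.2 z ∂μ := by rw [em]
          _ = ∏ z, ∫ ω, g z ω ^ quadMult p.1 p.2 q.1 q.2 z ∂μ := hVprod
          _ = _ := aux_quad_eval hgmean p.1 p.2 q.1 q.2
  -- put it together
  have hABint : Integrable
      (fun ω => ((∑ i, a i * h i ω + n1 ω) * (∑ i, h i ω * x i + n2 ω)) ^ 2) μ := by
    have : (fun ω => ((∑ i, a i * h i ω + n1 ω) * (∑ i, h i ω * x i + n2 ω)) ^ 2)
        = fun ω => ∑ p : ι₀ × ι₀, ∑ q : ι₀ × ι₀, (α p.1 * β p.2 * (α q.1 * β q.2)) *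
          (g p.1 ω * g p.2 ω * g q.1 ω * g q.2 ω) := by
      funext ω
      rw [hA ω, hB ω, expand ω]
    rw [this]
    exact integrable_finset_sum _ (fun p _ => integrable_finset_sum _ (fun q _ => (key p q).1))
  refine ⟨hABint, ?_⟩
  have hval : ∫ ω, ((∑ i, a i * h i ω + n1 ω) * (∑ i, h i ω * x i + n2 ω)) ^ 2 ∂μ =
      ∑ p : ι₀ × ι₀, ∑ q : ι₀ × ι₀, (α p.1 * β p.2 * (α q.1 * β q.2)) *
        ((if p.1 = p.2 ∧ q.1 = q.2 then (∫ ω, g p.1 ω ^ 2 ∂μ) * (∫ ω, g q.1 ω ^ 2 ∂μ) else 0)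
        + (if p.1 = q.1 ∧ p.2 = q.2 then (∫ ω, g p.1 ω ^ 2 ∂μ) * (∫ ω, g p.2 ω ^ 2 ∂μ) else 0)
        + (if p.1 = q.2 ∧ p.2 = q.1 then (∫ ω, g p.1 ω ^ 2 ∂μ) * (∫ ω, g p.2 ω ^ 2 ∂μ) else 0)
        + (if p.1 = p.2 ∧ p.1 = q.1 ∧ p.1 = q.2 then
            (∫ ω, g p.1 ω ^ 4 ∂μ) - 3 * (∫ ω, g p.1 ω ^ 2 ∂μ) ^ 2 else 0)) := by
    have e0 : (fun ω => ((∑ i, a i * h i ω + n1 ω) * (∑ i, h i ω * x i + n2 ω)) ^ 2)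
        = fun ω => ∑ p : ι₀ × ι₀, ∑ q : ι₀ × ι₀, (α p.1 * β p.2 * (α q.1 * β q.2)) *
          (g p.1 ω * g p.2 ω * g q.1 ω * g q.2 ω) := by
      funext ω
      rw [hA ω, hB ω, expand ω]
    rw [e0, integral_finset_sum _
      (fun p _ => integrable_finset_sum _ (fun q _ => (key p q).1))]
    refine Finset.sum_congr rfl fun p _ => ?_
    rw [integral_finset_sum _ (fun q _ => (key p q).1)]
    exact Finset.sum_congr rfl fun q _ => (key p q).2
  rw [hval, aux_sum_eval α β (fun z => ∫ ω, g z ω ^ 2 ∂μ) (fun z => ∫ ω, g z ω ^ 4 ∂μ)]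
  -- reduce the ι₀-sums to Fin N sums
  have s1 : ∑ z : ι₀, α z ^ 2 * ∫ ω, g z ω ^ 2 ∂μ
      = ∑ i, a i ^ 2 * ∫ ω, h i ω ^ 2 ∂μ + ∫ ω, n1 ω ^ 2 ∂μ := by
    rw [Fintype.sum_sum_type, Fin.sum_univ_two]
    simp [hα_def, hg_def]
  have s2 : ∑ z : ι₀, β z ^ 2 * ∫ ω, g z ω ^ 2 ∂μ
      = ∑ i, x i ^ 2 * ∫ ω, h i ω ^ 2 ∂μ + ∫ ω, n2 ω ^ 2 ∂μ := by
    rw [Fintype.sum_sum_type, Fin.sum_univ_two]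
    simp [hβ_def, hg_def]
  have s3 : ∑ z : ι₀, α z * β z * ∫ ω, g z ω ^ 2 ∂μ
      = ∑ i, a i * x i * ∫ ω, h i ω ^ 2 ∂μ := by
    rw [Fintype.sum_sum_type, Fin.sum_univ_two]
    simp [hα_def, hβ_def, hg_def]
  have s4 : ∑ z : ι₀, α z ^ 2 * β z ^ 2 *
      ((∫ ω, g z ω ^ 4 ∂μ) - 3 * (∫ ω, g z ω ^ 2 ∂μ) ^ 2)
      = ∑ i, a i ^ 2 * x i ^ 2 * ((∫ ω, h i ω ^ 4 ∂μ) - 3 * (∫ ω, h i ω ^ 2 ∂μ) ^ 2) := by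
    rw [Fintype.sum_sum_type, Fin.sum_univ_two]
    simp [hα_def, hβ_def, hg_def]
  rw [s1, s2, s3, s4]

end core


/-- Second-moment bound for the EZOFL zero-order gradient estimate (Lemma 2):
`E[‖Φ (∑ aᵢhᵢ + n₁)(∑ hᵢXᵢ + n₂)‖²]` is bounded by the explicit constant
`b₂² [σ₁²σ₂² + 4b₂²L²γ²σ₁² ∑ E[hᵢ²] + σ₂² ∑ aᵢ²E[hᵢ²]
  + 4b₂²L²γ² (∑∑ aᵢ²E[hᵢ²]E[hⱼ²] + 2∑∑ aᵢaⱼE[hᵢ²]E[hⱼ²] + ∑ aᵢ²E[hᵢ⁴])]`. -/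
theorem ezofl_second_moment_bound
    {d N : ℕ} {Ω : Type*} [MeasurableSpace Ω] (μ : Measure Ω) [IsProbabilityMeasure μ]
    (b₂ L γ σ₁ σ₂ : ℝ)
    (Φ : Ω → EuclideanSpace ℝ (Fin d)) (hΦmeas : Measurable Φ)
    (hΦbdd : ∀ᵐ ω ∂μ, ‖Φ ω‖ ≤ b₂)
    (X : Fin N → Ω → ℝ) (hXmeas : ∀ i, Measurable (X i))
    (hXbdd : ∀ i, ∀ᵐ ω ∂μ, |X i ω| ≤ 2 * L * γ * b₂)
    (h : Fin N → Ω → ℝ) (n1 n2 : Ω → ℝ)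
    (hmeas : ∀ i, Measurable (h i)) (hn1 : Measurable n1) (hn2 : Measurable n2)
    (hL4 : ∀ i, MemLp (h i) 4 μ) (hn1L2 : MemLp n1 2 μ) (hn2L2 : MemLp n2 2 μ)
    (hmean : ∀ i, ∫ ω, h i ω ∂μ = 0)
    (hn1mean : ∫ ω, n1 ω ∂μ = 0) (hn2mean : ∫ ω, n2 ω ∂μ = 0)
    (hn1var : ∫ ω, (n1 ω) ^ 2 ∂μ = σ₁ ^ 2) (hn2var : ∫ ω, (n2 ω) ^ 2 ∂μ = σ₂ ^ 2)
    (hIndep : iIndepFun (Sum.elim h ![n1, n2]) μ)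
    (hIndepBlock : IndepFun (fun ω => (fun i => h i ω, n1 ω, n2 ω))
      (fun ω => (Φ ω, fun i => X i ω)) μ)
    (a : Fin N → ℝ) (hapos : ∀ i, 0 ≤ a i) :
    ∫ ω, ‖((∑ i, a i * h i ω + n1 ω) * (∑ i, h i ω * X i ω + n2 ω)) • Φ ω‖ ^ 2 ∂μ ≤
      b₂ ^ 2 * (σ₁ ^ 2 * σ₂ ^ 2
        + 4 * b₂ ^ 2 * L ^ 2 * γ ^ 2 * σ₁ ^ 2 * ∑ i, ∫ ω, (h i ω) ^ 2 ∂μ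
        + σ₂ ^ 2 * ∑ i, a i ^ 2 * ∫ ω, (h i ω) ^ 2 ∂μ
        + 4 * b₂ ^ 2 * L ^ 2 * γ ^ 2 *
          ((∑ i, ∑ j, a i ^ 2 * (∫ ω, (h i ω) ^ 2 ∂μ) * (∫ ω, (h j ω) ^ 2 ∂μ))
            + 2 * ∑ i, ∑ j, a i * a j * (∫ ω, (h i ω) ^ 2 ∂μ) * (∫ ω, (h j ω) ^ 2 ∂μ)
            + ∑ i, a i ^ 2 * ∫ ω, (h i ω) ^ 4 ∂μ)) := by

  classical
  -- basic nonnegativity facts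
  have hμne : μ ≠ 0 := IsProbabilityMeasure.ne_zero μ
  haveI : (ae μ).NeBot := ae_neBot.mpr hμne
  obtain ⟨ω₀, hω₀⟩ := hΦbdd.exists
  have hb₂ : 0 ≤ b₂ := le_trans (norm_nonneg _) hω₀
  set c : ℝ := |2 * L * γ * b₂| with hc_def
  have hX' : ∀ i, ∀ᵐ ω ∂μ, |X i ω| ≤ c :=
    fun i => (hXbdd i).mono fun ω hω => hω.trans (le_abs_self _)
  have hEnn : ∀ i, (0:ℝ) ≤ ∫ ω, h i ω ^ 2 ∂μ :=
    fun i => integral_nonneg fun ω => sq_nonneg _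
  have hFnn : ∀ i, (0:ℝ) ≤ ∫ ω, h i ω ^ 4 ∂μ :=
    fun i => integral_nonneg fun ω => by positivity
  set K : ℝ := σ₁ ^ 2 * σ₂ ^ 2 + c ^ 2 * σ₁ ^ 2 * (∑ i, ∫ ω, h i ω ^ 2 ∂μ)
      + σ₂ ^ 2 * (∑ i, a i ^ 2 * ∫ ω, h i ω ^ 2 ∂μ)
      + c ^ 2 * ((∑ i, a i ^ 2 * ∫ ω, h i ω ^ 2 ∂μ) * (∑ i, ∫ ω, h i ω ^ 2 ∂μ)
        + 2 * (∑ i, a i * ∫ ω, h i ω ^ 2 ∂μ) ^ 2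
        + ∑ i, a i ^ 2 * ∫ ω, h i ω ^ 4 ∂μ) with hK_def
  have hKnn : 0 ≤ K := by
    rw [hK_def]
    have h1 : (0:ℝ) ≤ ∑ i, ∫ ω, h i ω ^ 2 ∂μ := Finset.sum_nonneg fun i _ => hEnn i
    have h2 : (0:ℝ) ≤ ∑ i, a i ^ 2 * ∫ ω, h i ω ^ 2 ∂μ :=
      Finset.sum_nonneg fun i _ => mul_nonneg (sq_nonneg _) (hEnn i)
    have h3 : (0:ℝ) ≤ ∑ i, a i ^ 2 * ∫ ω, h i ω ^ 4 ∂μ :=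
      Finset.sum_nonneg fun i _ => mul_nonneg (sq_nonneg _) (hFnn i)
    positivity
  -- block maps
  set T : Ω → (Fin N → ℝ) × ℝ × ℝ := fun ω => (fun i => h i ω, n1 ω, n2 ω) with hT_def
  set S : Ω → EuclideanSpace ℝ (Fin d) × (Fin N → ℝ) :=
    fun ω => (Φ ω, fun i => X i ω) with hS_def
  have hTmeas : Measurable T :=
    (measurable_pi_lambda _ fun i => hmeas i).prodMk (hn1.prodMk hn2)
  have hSmeas : Measurable S :=
    hΦmeas.prodMk (measurable_pi_lambda _ fun i => hXmeas i)
  set G : ((Fin N → ℝ) × ℝ × ℝ) × (EuclideanSpace ℝ (Fin d) × (Fin N → ℝ)) → ℝ := fun z =>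
    ((∑ i, a i * z.1.1 i + z.1.2.1) * (∑ i, z.1.1 i * z.2.2 i + z.1.2.2)) ^ 2 * ‖z.2.1‖ ^ 2
    with hG_def
  have hGmeas : Measurable G := by
    rw [hG_def]
    fun_prop
  have hGnn : ∀ z, 0 ≤ G z := fun z => by rw [hG_def]; positivity
  have hfG : ∀ ω, ‖((∑ i, a i * h i ω + n1 ω) * (∑ i, h i ω * X i ω + n2 ω)) • Φ ω‖ ^ 2
      = G (T ω, S ω) := by
    intro ω
    rw [norm_smul, mul_pow, Real.norm_eq_abs, sq_abs]
  have hmapTS : μ.map (fun ω => (T ω, S ω)) = (μ.map T).prod (μ.map S) :=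
    (indepFun_iff_map_prod_eq_prod_map_map hTmeas.aemeasurable hSmeas.aemeasurable).mp
      hIndepBlock
  -- the inner (conditional) bound
  have hinner : ∀ z : EuclideanSpace ℝ (Fin d) × (Fin N → ℝ), ‖z.1‖ ≤ b₂ →
      (∀ i, |z.2 i| ≤ c) →
      (∫⁻ t, ENNReal.ofReal (G (t, z)) ∂(μ.map T)) ≤ ENNReal.ofReal (K * b₂ ^ 2) := by
    intro z hz1 hz2
    obtain ⟨hCint, hCval⟩ := aux_core h n1 n2 hmeas hn1 hn2 hL4 hn1L2 hn2L2
      hmean hn1mean hn2mean hIndep a z.2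
    have hGz : (fun ω => G (T ω, z)) = fun ω =>
        ((∑ i, a i * h i ω + n1 ω) * (∑ i, h i ω * z.2 i + n2 ω)) ^ 2 * ‖z.1‖ ^ 2 := rfl
    have hint2 : Integrable (fun ω => G (T ω, z)) μ := by
      rw [hGz]
      exact hCint.mul_const _
    have hm : Measurable fun t : (Fin N → ℝ) × ℝ × ℝ => ENNReal.ofReal (G (t, z)) :=
      (hGmeas.comp' (measurable_id.prodMk measurable_const)).ennreal_ofReal
    rw [lintegral_map hm hTmeas]
    rw [← ofReal_integral_eq_lintegral_ofReal hint2 (ae_of_all _ fun ω => hGnn _)]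
    apply ENNReal.ofReal_le_ofReal
    have heq : ∫ ω, G (T ω, z) ∂μ =
        (∫ ω, ((∑ i, a i * h i ω + n1 ω) * (∑ i, h i ω * z.2 i + n2 ω)) ^ 2 ∂μ) * ‖z.1‖ ^ 2 := by
      rw [hGz, integral_mul_const]
    rw [heq]
    have hKb : ∫ ω, ((∑ i, a i * h i ω + n1 ω) * (∑ i, h i ω * z.2 i + n2 ω)) ^ 2 ∂μ ≤ K := by
      rw [hCval, hn1var, hn2var, hK_def]
      exact aux_bound a z.2 (fun i => ∫ ω, h i ω ^ 2 ∂μ) (fun i => ∫ ω, h i ω ^ 4 ∂μ)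
        c (σ₁ ^ 2) (σ₂ ^ 2) hapos hz2 hEnn hFnn (sq_nonneg _) (sq_nonneg _)
    have hintnn : (0:ℝ) ≤ ∫ ω, ((∑ i, a i * h i ω + n1 ω) * (∑ i, h i ω * z.2 i + n2 ω)) ^ 2 ∂μ :=
      integral_nonneg fun ω => sq_nonneg _
    exact mul_le_mul hKb (pow_le_pow_left₀ (norm_nonneg _) hz1 2) (sq_nonneg _) hKnn
  -- the good event on the image measure
  have hsetmeas : MeasurableSet {z : EuclideanSpace ℝ (Fin d) × (Fin N → ℝ) |
      ‖z.1‖ ≤ b₂ ∧ ∀ i, |z.2 i| ≤ c} := by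
    have : {z : EuclideanSpace ℝ (Fin d) × (Fin N → ℝ) | ‖z.1‖ ≤ b₂ ∧ ∀ i, |z.2 i| ≤ c}
        = {z | ‖z.1‖ ≤ b₂} ∩ ⋂ i, {z | |z.2 i| ≤ c} := by
      ext z
      simp [Set.mem_iInter]
    rw [this]
    refine (measurableSet_le measurable_fst.norm measurable_const).inter ?_
    exact MeasurableSet.iInter fun i =>
      measurableSet_le ((measurable_pi_apply i).comp' measurable_snd).abs measurable_const
  have hgood : ∀ᵐ z ∂(μ.map S), ‖z.1‖ ≤ b₂ ∧ ∀ i, |z.2 i| ≤ c := by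
    rw [ae_map_iff hSmeas.aemeasurable hsetmeas]
    filter_upwards [hΦbdd, ae_all_iff.mpr hX'] with ω h1 h2
    exact ⟨h1, h2⟩
  -- lintegral chain
  have hchain : ∫⁻ ω, ENNReal.ofReal (G (T ω, S ω)) ∂μ ≤ ENNReal.ofReal (K * b₂ ^ 2) := by
    haveI : IsProbabilityMeasure (μ.map S) := Measure.isProbabilityMeasure_map hSmeas.aemeasurable
    calc ∫⁻ ω, ENNReal.ofReal (G (T ω, S ω)) ∂μ
        = ∫⁻ z, ENNReal.ofReal (G z) ∂(μ.map (fun ω => (T ω, S ω))) :=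
          (lintegral_map hGmeas.ennreal_ofReal (hTmeas.prodMk hSmeas)).symm
      _ = ∫⁻ z, ENNReal.ofReal (G z) ∂((μ.map T).prod (μ.map S)) := by rw [hmapTS]
      _ = ∫⁻ s, ∫⁻ t, ENNReal.ofReal (G (t, s)) ∂(μ.map T) ∂(μ.map S) :=
          lintegral_prod_symm _ hGmeas.ennreal_ofReal.aemeasurable
      _ ≤ ∫⁻ _s, ENNReal.ofReal (K * b₂ ^ 2) ∂(μ.map S) :=
          lintegral_mono_ae (hgood.mono fun z hz => hinner z hz.1 hz.2)
      _ = ENNReal.ofReal (K * b₂ ^ 2) := by simp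
  -- wrap up
  have hKb₂nn : 0 ≤ K * b₂ ^ 2 := mul_nonneg hKnn (sq_nonneg _)
  have hfinal : ∫ ω, ‖((∑ i, a i * h i ω + n1 ω) * (∑ i, h i ω * X i ω + n2 ω)) • Φ ω‖ ^ 2 ∂μ
      ≤ K * b₂ ^ 2 := by
    have he : (fun ω => ‖((∑ i, a i * h i ω + n1 ω) * (∑ i, h i ω * X i ω + n2 ω)) • Φ ω‖ ^ 2)
        = fun ω => G (T ω, S ω) := funext hfG
    rw [he, integral_eq_lintegral_of_nonneg_ae (ae_of_all _ fun ω => hGnn _)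
      ((hGmeas.comp (hTmeas.prodMk hSmeas)).aestronglyMeasurable)]
    calc (∫⁻ ω, ENNReal.ofReal (G (T ω, S ω)) ∂μ).toReal
        ≤ (ENNReal.ofReal (K * b₂ ^ 2)).toReal :=
          ENNReal.toReal_mono ENNReal.ofReal_ne_top hchain
      _ = K * b₂ ^ 2 := ENNReal.toReal_ofReal hKb₂nn
  refine hfinal.trans (le_of_eq ?_)
  -- identify K * b₂² with the stated bound
  have hDD1 : ∑ i, ∑ j, a i ^ 2 * (∫ ω, h i ω ^ 2 ∂μ) * (∫ ω, h j ω ^ 2 ∂μ)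
      = (∑ i, a i ^ 2 * ∫ ω, h i ω ^ 2 ∂μ) * (∑ j, ∫ ω, h j ω ^ 2 ∂μ) := by
    rw [Finset.sum_mul_sum]
  have hDD2 : ∑ i, ∑ j, a i * a j * (∫ ω, h i ω ^ 2 ∂μ) * (∫ ω, h j ω ^ 2 ∂μ)
      = (∑ i, a i * ∫ ω, h i ω ^ 2 ∂μ) ^ 2 := by
    rw [sq, Finset.sum_mul_sum]
    exact Finset.sum_congr rfl fun i _ => Finset.sum_congr rfl fun j _ => by ring
  have hc2 : c ^ 2 = 4 * b₂ ^ 2 * L ^ 2 * γ ^ 2 := by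
    rw [hc_def, sq_abs]
    ring
  rw [hDD1, hDD2, hK_def, hc2]
  ring
end

section
/- Let v₁, …, v_N ∈ ℝ^d be fixed vectors. Let Φ be a random vector in ℝ^d satisfying the perturbation assumption with constants b₁, b₂ > 0, and let h₁, …, h_N, n₁, n₂ be mutually independent zero-mean real random variables with finite second moments and E[h_i²] > 0, independent of Φ. Set a_i = 1/E[h_i²]. Then E[Φ (∑_{i=1}^N a_i h_i + n₁)(∑_{i=1}^N ⟨v_i, Φ⟩ h_i + n₂)] = b₁ ∑_{i=1}^N v_i. -/
open MeasureTheory ProbabilityTheory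

private theorem L2mul' {Ω : Type*} [MeasurableSpace Ω] {μ : Measure Ω} {f g : Ω → ℝ}
    (hf : MemLp f 2 μ) (hg : MemLp g 2 μ) : Integrable (fun ω => f ω * g ω) μ := by
  rw [← memLp_one_iff_integrable]
  have h2 : (1:ENNReal)/1 = 1/2 + 1/2 := by
    rw [ENNReal.div_add_div_same, one_div_one, one_add_one_eq_two, ENNReal.div_self] <;> norm_num
  have := hf.smul (E := ℝ) (𝕜 := ℝ) hg (p := 2) (q := 2) (r := 1)
  exact (by simpa [smul_eq_mul, mul_comm] using this : MemLp (f * g) 1 μ)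

private theorem coord_le' {d : ℕ} (x : EuclideanSpace ℝ (Fin d)) (l : Fin d) : |x l| ≤ ‖x‖ := by
  rw [PiLp.norm_eq_of_L2]
  apply Real.abs_le_sqrt
  calc x l ^ 2 = ‖x l‖ ^ 2 := by rw [Real.norm_eq_abs, sq_abs]
  _ ≤ _ := Finset.single_le_sum (f := fun i => ‖x i‖ ^ 2) (fun i _ => by positivity)
      (Finset.mem_univ l)

private theorem int_mul_bdd {Ω : Type*} [MeasurableSpace Ω] {μ : Measure Ω} {f g : Ω → ℝ} {C : ℝ}
    (hf : Integrable f μ) (hg : Measurable g) (hbd : ∀ᵐ ω ∂μ, |g ω| ≤ C) :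
    Integrable (fun ω => f ω * g ω) μ := by
  refine Integrable.mono' (hf.norm.const_mul C) (hf.aestronglyMeasurable.mul hg.aestronglyMeasurable) ?_
  filter_upwards [hbd] with ω hω
  rw [Real.norm_eq_abs, abs_mul]
  calc |f ω| * |g ω| ≤ |f ω| * C := mul_le_mul_of_nonneg_left hω (abs_nonneg _)
  _ = C * ‖f ω‖ := by rw [Real.norm_eq_abs]; ring

/-- Unbiasedness of the EFOFL first-order gradient estimate (Lemma 3): with a perturbation
vector `Φ` (constants `b₁, b₂`), zero-mean mutually independent channels/noises independent
of `Φ`, and pilots `a_i = 1/E[h_i²]`,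
`E[Φ (∑ aᵢhᵢ + n₁)(∑ ⟨vᵢ,Φ⟩hᵢ + n₂)] = b₁ ∑ vᵢ`. -/
theorem efofl_unbiased
    {d N : ℕ} {Ω : Type*} [MeasurableSpace Ω] (μ : Measure Ω) [IsProbabilityMeasure μ]
    (v : Fin N → EuclideanSpace ℝ (Fin d))
    (b₁ b₂ : ℝ) (hb₁ : 0 < b₁) (hb₂ : 0 < b₂)
    (Φ : Ω → EuclideanSpace ℝ (Fin d)) (hΦmeas : Measurable Φ)
    (hΦcov : ∀ j l : Fin d, j ≠ l → ∫ ω, Φ ω j * Φ ω l ∂μ = 0)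
    (hΦvar : ∀ j : Fin d, ∫ ω, (Φ ω j) ^ 2 ∂μ = b₁)
    (hΦbdd : ∀ᵐ ω ∂μ, ‖Φ ω‖ ≤ b₂)
    (h : Fin N → Ω → ℝ) (n1 n2 : Ω → ℝ)
    (hmeas : ∀ i, Measurable (h i)) (hn1 : Measurable n1) (hn2 : Measurable n2)
    (hL2 : ∀ i, MemLp (h i) 2 μ) (hn1L2 : MemLp n1 2 μ) (hn2L2 : MemLp n2 2 μ)
    (hmean : ∀ i, ∫ ω, h i ω ∂μ = 0)
    (hn1mean : ∫ ω, n1 ω ∂μ = 0) (hn2mean : ∫ ω, n2 ω ∂μ = 0)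
    (hpos : ∀ i, 0 < ∫ ω, (h i ω) ^ 2 ∂μ)
    (hIndep : iIndepFun (Sum.elim h ![n1, n2]) μ)
    (hIndepΦ : IndepFun (fun ω => (fun i => h i ω, n1 ω, n2 ω)) Φ μ)
    (a : Fin N → ℝ) (ha : ∀ i, a i = (∫ ω, (h i ω) ^ 2 ∂μ)⁻¹) :
    (∫ ω, ((∑ i, a i * h i ω + n1 ω) *
        (∑ i, (inner ℝ (v i) (Φ ω) : ℝ) * h i ω + n2 ω)) • Φ ω ∂μ) =
      b₁ • ∑ i, v i := by
  classical
  -- abbreviations (as plain functions)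
  have hcmeas : ∀ j, Measurable (fun ω => (inner ℝ (v j) (Φ ω) : ℝ)) :=
    fun j => Measurable.inner measurable_const hΦmeas
  have hΦl : ∀ l : Fin d, Measurable (fun ω => Φ ω l) :=
    fun l => ((EuclideanSpace.proj (𝕜 := ℝ) l).measurable).comp hΦmeas
  have hcbd : ∀ j, ∀ᵐ ω ∂μ, |(inner ℝ (v j) (Φ ω) : ℝ)| ≤ ‖v j‖ * b₂ := by
    intro j
    filter_upwards [hΦbdd] with ω hω
    calc |(inner ℝ (v j) (Φ ω) : ℝ)| ≤ ‖v j‖ * ‖Φ ω‖ := abs_real_inner_le_norm _ _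
    _ ≤ ‖v j‖ * b₂ := mul_le_mul_of_nonneg_left hω (norm_nonneg _)
  have hΦlbd : ∀ l : Fin d, ∀ᵐ ω ∂μ, |Φ ω l| ≤ b₂ := by
    intro l
    filter_upwards [hΦbdd] with ω hω
    exact (coord_le' _ _).trans hω
  -- measurability of T
  have hTmeas : Measurable (fun ω => ((fun i => h i ω, n1 ω, n2 ω) : (Fin N → ℝ) × ℝ × ℝ)) :=
    (measurable_pi_lambda _ fun i => hmeas i).prodMk (hn1.prodMk hn2)
  -- independence multiplication principle
  have key : ∀ (F : (Fin N → ℝ) × ℝ × ℝ → ℝ) (G : EuclideanSpace ℝ (Fin d) → ℝ),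
      Measurable F → Measurable G →
      ∫ ω, F (fun i => h i ω, n1 ω, n2 ω) * G (Φ ω) ∂μ =
        (∫ ω, F (fun i => h i ω, n1 ω, n2 ω) ∂μ) * ∫ ω, G (Φ ω) ∂μ := by
    intro F G hF hG
    exact (hIndepΦ.comp hF hG).integral_fun_mul_eq_mul_integral (hF.comp hTmeas).aestronglyMeasurable
      (hG.comp hΦmeas).aestronglyMeasurable
  -- pairwise zero-mean products among h's and noises
  have hhij : ∀ i j : Fin N, i ≠ j → ∫ ω, h i ω * h j ω ∂μ = 0 := by
    intro i j hij
    have hne : (Sum.inl i : Fin N ⊕ Fin 2) ≠ Sum.inl j := by simpa using hij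
    have := (hIndep.indepFun hne).integral_fun_mul_eq_mul_integral
      (hmeas i).aestronglyMeasurable (hmeas j).aestronglyMeasurable
    simpa [hmean i] using this
  have hhn2 : ∀ i : Fin N, ∫ ω, h i ω * n2 ω ∂μ = 0 := by
    intro i
    have hne : (Sum.inl i : Fin N ⊕ Fin 2) ≠ Sum.inr 1 := by simp
    have := (hIndep.indepFun hne).integral_fun_mul_eq_mul_integral
      (hmeas i).aestronglyMeasurable hn2.aestronglyMeasurable
    simpa [hmean i] using this
  have hn1h : ∀ j : Fin N, ∫ ω, n1 ω * h j ω ∂μ = 0 := by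
    intro j
    have hne : (Sum.inr 0 : Fin N ⊕ Fin 2) ≠ Sum.inl j := by simp
    have := (hIndep.indepFun hne).integral_fun_mul_eq_mul_integral
      hn1.aestronglyMeasurable (hmeas j).aestronglyMeasurable
    simpa [hn1mean] using this
  have hn1n2 : ∫ ω, n1 ω * n2 ω ∂μ = 0 := by
    have hne : (Sum.inr 0 : Fin N ⊕ Fin 2) ≠ Sum.inr 1 := by simp [Fin.ext_iff]
    have := (hIndep.indepFun hne).integral_fun_mul_eq_mul_integral
      hn1.aestronglyMeasurable hn2.aestronglyMeasurable
    simpa [hn1mean] using this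
  -- E[A * h j] = 1
  have hAhj : ∀ j : Fin N, ∫ ω, (∑ i, a i * h i ω + n1 ω) * h j ω ∂μ = 1 := by
    intro j
    have hpt : ∀ ω, (∑ i, a i * h i ω + n1 ω) * h j ω
        = ∑ i, a i * (h i ω * h j ω) + n1 ω * h j ω := by
      intro ω
      rw [add_mul, Finset.sum_mul]
      simp [mul_assoc]
    rw [integral_congr_ae (Filter.Eventually.of_forall hpt),
      integral_add (integrable_finset_sum _ fun i _ => ((L2mul' (hL2 i) (hL2 j)).const_mul (a i)))
        (L2mul' hn1L2 (hL2 j)),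
      integral_finset_sum _ (fun i _ => ((L2mul' (hL2 i) (hL2 j)).const_mul (a i))),
      hn1h j, add_zero]
    have hsq : ∫ ω, h j ω * h j ω ∂μ = ∫ ω, (h j ω) ^ 2 ∂μ := by
      apply integral_congr_ae; filter_upwards with ω; ring
    rw [Finset.sum_eq_single j]
    · rw [integral_const_mul, hsq, ha j, inv_mul_cancel₀ (hpos j).ne']
    · intro i _ hij
      rw [integral_const_mul, hhij i j hij, mul_zero]
    · intro habs; exact absurd (Finset.mem_univ j) habs
  -- E[A * n2] = 0
  have hAn2 : ∫ ω, (∑ i, a i * h i ω + n1 ω) * n2 ω ∂μ = 0 := by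
    have hpt : ∀ ω, (∑ i, a i * h i ω + n1 ω) * n2 ω
        = ∑ i, a i * (h i ω * n2 ω) + n1 ω * n2 ω := by
      intro ω
      rw [add_mul, Finset.sum_mul]
      simp [mul_assoc]
    rw [integral_congr_ae (Filter.Eventually.of_forall hpt),
      integral_add (integrable_finset_sum _ fun i _ => ((L2mul' (hL2 i) hn2L2).const_mul (a i)))
        (L2mul' hn1L2 hn2L2),
      integral_finset_sum _ (fun i _ => ((L2mul' (hL2 i) hn2L2).const_mul (a i))),
      hn1n2, add_zero]
    apply Finset.sum_eq_zero
    intro i _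
    rw [integral_const_mul, hhn2 i, mul_zero]
  -- integrability of coordinates and their products
  have hΦint : ∀ m : Fin d, Integrable (fun ω => Φ ω m) μ := by
    intro m
    refine Integrable.mono' (integrable_const b₂) (hΦl m).aestronglyMeasurable ?_
    filter_upwards [hΦlbd m] with ω hω
    simpa using hω
  have hΦml : ∀ m l : Fin d, Integrable (fun ω => Φ ω m * Φ ω l) μ :=
    fun m l => int_mul_bdd (hΦint m) (hΦl l) (hΦlbd l)
  -- E[⟪v j, Φ⟫ Φ_l] = b₁ v j l
  have hG : ∀ (j : Fin N) (l : Fin d),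
      ∫ ω, (inner ℝ (v j) (Φ ω) : ℝ) * Φ ω l ∂μ = b₁ * v j l := by
    intro j l
    have hpt : ∀ ω, (inner ℝ (v j) (Φ ω) : ℝ) * Φ ω l
        = ∑ m, v j m * (Φ ω m * Φ ω l) := by
      intro ω
      simp only [PiLp.inner_apply, RCLike.inner_apply, conj_trivial]
      rw [Finset.sum_mul]
      simp [mul_assoc]
      exact Finset.sum_congr rfl fun m _ => by ring
    rw [integral_congr_ae (Filter.Eventually.of_forall hpt),
      integral_finset_sum _ (fun m _ => (hΦml m l).const_mul (v j m))]
    rw [Finset.sum_eq_single l]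
    · have hsq : ∫ ω, Φ ω l * Φ ω l ∂μ = ∫ ω, (Φ ω l) ^ 2 ∂μ := by
        apply integral_congr_ae; filter_upwards with ω; ring
      rw [integral_const_mul, hsq, hΦvar l, mul_comm]
    · intro m _ hml
      rw [integral_const_mul, hΦcov m l hml, mul_zero]
    · intro habs; exact absurd (Finset.mem_univ l) habs
  -- L2 membership of factors
  have hAL2 : MemLp (fun ω => ∑ i, a i * h i ω + n1 ω) 2 μ := by
    refine MemLp.add ?_ hn1L2
    exact memLp_finset_sum _ (fun i _ => (hL2 i).const_mul (a i))
  have hcjh : ∀ j, MemLp (fun ω => (inner ℝ (v j) (Φ ω) : ℝ) * h j ω) 2 μ := by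
    intro j
    refine MemLp.of_le ((hL2 j).const_mul (‖v j‖ * b₂))
      ((hcmeas j).mul (hmeas j)).aestronglyMeasurable ?_
    filter_upwards [hcbd j] with ω hω
    rw [Real.norm_eq_abs, Real.norm_eq_abs, abs_mul, abs_mul]
    have h1 : (0:ℝ) ≤ ‖v j‖ * b₂ := mul_nonneg (norm_nonneg _) hb₂.le
    calc |(inner ℝ (v j) (Φ ω) : ℝ)| * |h j ω| ≤ (‖v j‖ * b₂) * |h j ω| :=
          mul_le_mul_of_nonneg_right hω (abs_nonneg _)
    _ ≤ |‖v j‖ * b₂| * |h j ω| := by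
          exact mul_le_mul_of_nonneg_right (le_abs_self _) (abs_nonneg _)
  have hBL2 : MemLp (fun ω => ∑ i, (inner ℝ (v i) (Φ ω) : ℝ) * h i ω + n2 ω) 2 μ := by
    refine MemLp.add ?_ hn2L2
    exact memLp_finset_sum _ (fun i _ => hcjh i)
  -- integrability of the full integrand
  have hS_int : Integrable (fun ω => (∑ i, a i * h i ω + n1 ω) *
      (∑ i, (inner ℝ (v i) (Φ ω) : ℝ) * h i ω + n2 ω)) μ := L2mul' hAL2 hBL2
  have hMemTop : MemLp Φ ⊤ μ := memLp_top_of_bound hΦmeas.aestronglyMeasurable b₂ hΦbdd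
  have hF_int : Integrable (fun ω => ((∑ i, a i * h i ω + n1 ω) *
      (∑ i, (inner ℝ (v i) (Φ ω) : ℝ) * h i ω + n2 ω)) • Φ ω) μ := by
    exact Integrable.smul_of_top_left hS_int hMemTop
  -- componentwise computation
  have hcomp : ∀ l : Fin d, ∫ ω, ((∑ i, a i * h i ω + n1 ω) *
      (∑ i, (inner ℝ (v i) (Φ ω) : ℝ) * h i ω + n2 ω)) * Φ ω l ∂μ = b₁ * ∑ i, v i l := by
    intro l
    have hpt : ∀ ω, ((∑ i, a i * h i ω + n1 ω) *
        (∑ i, (inner ℝ (v i) (Φ ω) : ℝ) * h i ω + n2 ω)) * Φ ω l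
        = ∑ j, ((∑ i, a i * h i ω + n1 ω) * h j ω) * ((inner ℝ (v j) (Φ ω) : ℝ) * Φ ω l)
          + ((∑ i, a i * h i ω + n1 ω) * n2 ω) * Φ ω l := by
      intro ω
      rw [mul_add, add_mul, Finset.mul_sum, Finset.sum_mul]
      congr 1
      exact Finset.sum_congr rfl fun j _ => by ring
    have hcΦbd : ∀ j : Fin N, ∀ᵐ ω ∂μ, |(inner ℝ (v j) (Φ ω) : ℝ) * Φ ω l| ≤ ‖v j‖ * b₂ * b₂ := by
      intro j
      filter_upwards [hcbd j, hΦlbd l] with ω h1 h2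
      rw [abs_mul]
      exact mul_le_mul h1 h2 (abs_nonneg _) (mul_nonneg (norm_nonneg _) hb₂.le)
    have hint1 : ∀ j : Fin N, Integrable (fun ω =>
        ((∑ i, a i * h i ω + n1 ω) * h j ω) * ((inner ℝ (v j) (Φ ω) : ℝ) * Φ ω l)) μ :=
      fun j => int_mul_bdd (L2mul' hAL2 (hL2 j)) ((hcmeas j).mul (hΦl l)) (hcΦbd j)
    have hint2 : Integrable (fun ω => ((∑ i, a i * h i ω + n1 ω) * n2 ω) * Φ ω l) μ :=
      int_mul_bdd (L2mul' hAL2 hn2L2) (hΦl l) (hΦlbd l)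
    calc ∫ ω, ((∑ i, a i * h i ω + n1 ω) *
            (∑ i, (inner ℝ (v i) (Φ ω) : ℝ) * h i ω + n2 ω)) * Φ ω l ∂μ
        = ∫ ω, (∑ j, ((∑ i, a i * h i ω + n1 ω) * h j ω) * ((inner ℝ (v j) (Φ ω) : ℝ) * Φ ω l)
            + ((∑ i, a i * h i ω + n1 ω) * n2 ω) * Φ ω l) ∂μ :=
          integral_congr_ae (Filter.Eventually.of_forall hpt)
      _ = ∑ j, ∫ ω, ((∑ i, a i * h i ω + n1 ω) * h j ω) * ((inner ℝ (v j) (Φ ω) : ℝ) * Φ ω l) ∂μ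
            + ∫ ω, ((∑ i, a i * h i ω + n1 ω) * n2 ω) * Φ ω l ∂μ := by
          rw [integral_add (integrable_finset_sum _ fun j _ => hint1 j) hint2,
            integral_finset_sum _ fun j _ => hint1 j]
      _ = ∑ j, (∫ ω, (∑ i, a i * h i ω + n1 ω) * h j ω ∂μ)
              * (∫ ω, (inner ℝ (v j) (Φ ω) : ℝ) * Φ ω l ∂μ)
            + (∫ ω, (∑ i, a i * h i ω + n1 ω) * n2 ω ∂μ) * (∫ ω, Φ ω l ∂μ) := by
          congr 1
          · refine Finset.sum_congr rfl fun j _ => ?_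
            exact key (fun p => (∑ i, a i * p.1 i + p.2.1) * p.1 j)
              (fun x => (inner ℝ (v j) x : ℝ) * x l)
              (((Finset.measurable_sum _ fun i _ =>
                  (measurable_const.mul ((measurable_pi_apply i).comp measurable_fst))).add
                  (measurable_fst.comp measurable_snd)).mul
                ((measurable_pi_apply j).comp measurable_fst))
              ((Measurable.inner measurable_const measurable_id).mul
                (EuclideanSpace.proj (𝕜 := ℝ) l).measurable)
          · exact key (fun p => (∑ i, a i * p.1 i + p.2.1) * p.2.2) (fun x => x l)
              (((Finset.measurable_sum _ fun i _ =>
                  (measurable_const.mul ((measurable_pi_apply i).comp measurable_fst))).add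
                  (measurable_fst.comp measurable_snd)).mul
                (measurable_snd.comp measurable_snd))
              (EuclideanSpace.proj (𝕜 := ℝ) l).measurable
      _ = ∑ j, 1 * (b₁ * v j l) + 0 * (∫ ω, Φ ω l ∂μ) := by
          rw [hAn2]
          congr 1
          exact Finset.sum_congr rfl fun j _ => by rw [hAhj j, hG j l]
      _ = b₁ * ∑ i, v i l := by
          rw [zero_mul, add_zero, Finset.mul_sum]
          exact Finset.sum_congr rfl fun j _ => by ring
  -- assemble the vector identity
  ext l
  have hproj := (EuclideanSpace.proj (𝕜 := ℝ) l).integral_comp_comm hF_int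
  have hL : (∫ ω, ((∑ i, a i * h i ω + n1 ω) *
      (∑ i, (inner ℝ (v i) (Φ ω) : ℝ) * h i ω + n2 ω)) • Φ ω ∂μ) l
      = ∫ ω, ((∑ i, a i * h i ω + n1 ω) *
        (∑ i, (inner ℝ (v i) (Φ ω) : ℝ) * h i ω + n2 ω)) * Φ ω l ∂μ := by
    refine Eq.trans hproj.symm ?_
    apply integral_congr_ae
    filter_upwards with ω
    simp [smul_eq_mul]
  rw [hL, hcomp l, PiLp.smul_apply, smul_eq_mul]
  congr 1
  induction (Finset.univ : Finset (Fin N)) using Finset.induction with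
  | empty => simp
  | insert x s hx ih => rw [Finset.sum_insert hx, Finset.sum_insert hx, ih]; rfl
end

section
/- Under the setting of the finite-horizon rate bound for Algorithm 1 — F : ℝ^d → ℝ differentiable, μ-smooth, bounded below with Δ̂ := F(θ₀) − inf F; step sizes η = η₀K^{-1/4}, γ = γ₀K^{-1/4}; iterates θ_{k+1} = θ_k − η g_k for k = 0, …, K−1 with E[g_k | 𝓗_k] = c₁γ(∇F(θ_k) + δ_k), ‖δ_k‖ ≤ c₃γ almost surely, and E[‖g_k‖² | 𝓗_k] ≤ Cγ² almost surely — if ε, β > 0 and K ≥ (1/(ε²β²)) (2Δ̂/(η₀γ₀c₁) + c₃²γ₀² + Cμη₀γ₀/c₁)², then P( min_{0 ≤ k ≤ K−1} ‖∇F(θ_k)‖² < ε ) ≥ 1 − β. -/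
open MeasureTheory Filter

lemma ezofl_descent {E : Type*} [NormedAddCommGroup E] [InnerProductSpace ℝ E]
    [CompleteSpace E]
    (F : E → ℝ) (μₛ : ℝ) (hdiff : Differentiable ℝ F)
    (hsmooth : ∀ x y : E, ‖gradient F x - gradient F y‖ ≤ μₛ * ‖x - y‖)
    (x y : E) :
    F y ≤ F x + inner ℝ (gradient F x) (y - x) + μₛ / 2 * ‖y - x‖ ^ 2 := by
  set v := y - x with hv
  have hgrad : ∀ p : E, HasFDerivAt F ((InnerProductSpace.toDual ℝ E) (gradient F p)) p :=
    fun p => ((hdiff p).hasGradientAt).hasFDerivAt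
  have hline : ∀ t : ℝ, HasDerivAt (fun s : ℝ => x + s • v) v t := by
    intro t
    simpa using ((hasDerivAt_id t).smul_const v).const_add x
  have hφ : ∀ t : ℝ, HasDerivAt (fun s : ℝ => F (x + s • v))
      (inner ℝ (gradient F (x + t • v)) v : ℝ) t := by
    intro t
    have := (hgrad (x + t • v)).comp_hasDerivAt t (hline t)
    simpa [InnerProductSpace.toDual_apply_apply, Function.comp_def] using this
  set ψ : ℝ → ℝ := fun t => F (x + t • v) - t * inner ℝ (gradient F x) v
    - μₛ / 2 * t ^ 2 * ‖v‖ ^ 2 with hψdef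
  have hψ : ∀ t : ℝ, HasDerivAt ψ
      ((inner ℝ (gradient F (x + t • v)) v : ℝ) - inner ℝ (gradient F x) v
        - μₛ * t * ‖v‖ ^ 2) t := by
    intro t
    have h1 : HasDerivAt (fun s : ℝ => s * (inner ℝ (gradient F x) v : ℝ))
        (inner ℝ (gradient F x) v : ℝ) t := hasDerivAt_mul_const _
    have h2 : HasDerivAt (fun s : ℝ => μₛ / 2 * s ^ 2 * ‖v‖ ^ 2)
        (μₛ * t * ‖v‖ ^ 2) t := by
      have := ((hasDerivAt_pow 2 t).const_mul (μₛ / 2)).mul_const (‖v‖ ^ 2)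
      exact this.congr_deriv (by ring)
    exact ((hφ t).sub h1).sub h2
  have hanti : AntitoneOn ψ (Set.Icc (0 : ℝ) 1) := by
    apply antitoneOn_of_deriv_nonpos (convex_Icc 0 1)
    · exact fun t _ => (hψ t).differentiableAt.continuousAt.continuousWithinAt
    · exact fun t _ => ((hψ t).differentiableAt).differentiableWithinAt
    · intro t ht
      rw [interior_Icc] at ht
      rw [(hψ t).deriv]
      have hinner : (inner ℝ (gradient F (x + t • v)) v : ℝ) - inner ℝ (gradient F x) v
          = inner ℝ (gradient F (x + t • v) - gradient F x) v := by
        rw [inner_sub_left]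
      rw [hinner]
      have h1 : (inner ℝ (gradient F (x + t • v) - gradient F x) v : ℝ)
          ≤ ‖gradient F (x + t • v) - gradient F x‖ * ‖v‖ := real_inner_le_norm _ _
      have h2 : ‖gradient F (x + t • v) - gradient F x‖ ≤ μₛ * (t * ‖v‖) := by
        have := hsmooth (x + t • v) x
        simpa [norm_smul, abs_of_pos ht.1] using this
      have h3 : ‖gradient F (x + t • v) - gradient F x‖ * ‖v‖ ≤ μₛ * (t * ‖v‖) * ‖v‖ :=
        mul_le_mul_of_nonneg_right h2 (norm_nonneg _)
      nlinarith [norm_nonneg v]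
  have h01 : ψ 1 ≤ ψ 0 :=
    hanti (Set.left_mem_Icc.2 zero_le_one) (Set.right_mem_Icc.2 zero_le_one) zero_le_one
  have hψ0 : ψ 0 = F x := by simp [hψdef]
  have hψ1 : ψ 1 = F y - inner ℝ (gradient F x) v - μₛ / 2 * ‖v‖ ^ 2 := by
    simp [hψdef, hv]
  rw [hψ0, hψ1] at h01
  linarith

lemma ezofl_integrable_inner {Ω : Type*} {m0 : MeasurableSpace Ω} {μ : Measure Ω}
    {E : Type*} [NormedAddCommGroup E] [InnerProductSpace ℝ E]
    {f g : Ω → E} (hf : MemLp f 2 μ) (hg : MemLp g 2 μ) :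
    Integrable (fun ω => (inner ℝ (f ω) (g ω) : ℝ)) μ := by
  have h1 : Integrable (fun ω => ‖f ω‖ ^ 2) μ :=
    (memLp_two_iff_integrable_sq_norm hf.aestronglyMeasurable).1 hf
  have h2 : Integrable (fun ω => ‖g ω‖ ^ 2) μ :=
    (memLp_two_iff_integrable_sq_norm hg.aestronglyMeasurable).1 hg
  refine Integrable.mono' (((h1.add h2).div_const 2))
    (hf.aestronglyMeasurable.inner hg.aestronglyMeasurable) ?_
  filter_upwards with ω
  have h3 : |(inner ℝ (f ω) (g ω) : ℝ)| ≤ ‖f ω‖ * ‖g ω‖ := abs_real_inner_le_norm _ _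
  have h4 : ‖f ω‖ * ‖g ω‖ ≤ (‖f ω‖ ^ 2 + ‖g ω‖ ^ 2) / 2 := by
    nlinarith [sq_nonneg (‖f ω‖ - ‖g ω‖)]
  simp only [Pi.add_apply, Real.norm_eq_abs]
  linarith

lemma ezofl_condexp_coord {Ω : Type*} {m : MeasurableSpace Ω} {m0 : MeasurableSpace Ω}
    {μ : Measure Ω} [IsFiniteMeasure μ] (hm : m ≤ m0) {d : ℕ}
    {g h : Ω → EuclideanSpace ℝ (Fin d)} (hg : Integrable g μ) (hh : Integrable h μ)
    (hhm : StronglyMeasurable[m] h) (hce : μ[g|m] =ᵐ[μ] h) (i : Fin d) :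
    (fun ω => h ω i) =ᵐ[μ] μ[(fun ω => g ω i)|m] := by
  haveI : SigmaFinite (μ.trim hm) := by infer_instance
  set L := EuclideanSpace.proj (𝕜 := ℝ) i with hL
  have hgi : Integrable (fun ω => g ω i) μ := by
    have := L.integrable_comp hg
    simpa [hL, Function.comp] using this
  have hhi : Integrable (fun ω => h ω i) μ := by
    have := L.integrable_comp hh
    simpa [hL, Function.comp] using this
  refine (ae_eq_condExp_of_forall_setIntegral_eq hm hgi
    (fun s _ _ => hhi.integrableOn) (fun s hs hμs => ?_) ?_)
  · have e1 : ∫ ω in s, h ω ∂μ = ∫ ω in s, g ω ∂μ := by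
      rw [← setIntegral_condExp hm hg hs]
      exact setIntegral_congr_ae (hm s hs) (hce.mono fun ω hω _ => hω.symm)
    have e2 : ∫ ω in s, h ω i ∂μ = L (∫ ω in s, h ω ∂μ) := by
      rw [← ContinuousLinearMap.integral_comp_comm L hh.integrableOn]
      rfl
    have e3 : ∫ ω in s, g ω i ∂μ = L (∫ ω in s, g ω ∂μ) := by
      rw [← ContinuousLinearMap.integral_comp_comm L hg.integrableOn]
      rfl
    rw [e2, e3, e1]
  · exact StronglyMeasurable.aestronglyMeasurable
      (L.continuous.comp_stronglyMeasurable hhm)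

lemma ezofl_coord_abs_le {n : ℕ} (x : EuclideanSpace ℝ (Fin n)) (i : Fin n) : |x i| ≤ ‖x‖ := by
  have h := abs_real_inner_le_norm (EuclideanSpace.single i (1:ℝ)) x
  simpa [EuclideanSpace.inner_single_left, EuclideanSpace.norm_single] using h

set_option maxHeartbeats 1000000 in
/-- High-probability sample-path convergence of EZOFL (Theorem 2, probability part):
if `K ≥ (1/(ε²β²)) (2Δ̂/(η₀γ₀c₁) + c₃²γ₀² + Cμₛη₀γ₀/c₁)²` with `Δ̂ = F(θ₀) − inf F`, then
`P(min_{0 ≤ k ≤ K−1} ‖∇F(θ_k)‖² < ε) ≥ 1 − β`. -/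
theorem ezofl_high_probability
    {d : ℕ} {Ω : Type*} {m0 : MeasurableSpace Ω} (μ : Measure Ω) [IsProbabilityMeasure μ]
    (ℱ : Filtration ℕ m0)
    (F : EuclideanSpace ℝ (Fin d) → ℝ) (μₛ : ℝ)
    (hdiff : Differentiable ℝ F)
    (hsmooth : ∀ x y : EuclideanSpace ℝ (Fin d),
      ‖gradient F x - gradient F y‖ ≤ μₛ * ‖x - y‖)
    (hbdd : BddBelow (Set.range F))
    (K : ℕ) (hK : 1 ≤ K)
    (c₁ c₃ C η₀ γ₀ : ℝ) (hc₁ : 0 < c₁) (hc₃ : 0 < c₃) (hC : 0 < C)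
    (hη₀ : 0 < η₀) (hγ₀ : 0 < γ₀)
    (η γ : ℝ)
    (hηdef : η = η₀ * (K : ℝ) ^ (-(1 / 4 : ℝ)))
    (hγdef : γ = γ₀ * (K : ℝ) ^ (-(1 / 4 : ℝ)))
    (θ : ℕ → Ω → EuclideanSpace ℝ (Fin d)) (hadapted : Adapted ℱ θ)
    (θ₀ : EuclideanSpace ℝ (Fin d)) (hθ0 : ∀ ω, θ 0 ω = θ₀)
    (g : ℕ → Ω → EuclideanSpace ℝ (Fin d)) (hgL2 : ∀ k, MemLp (g k) 2 μ)
    (hupdate : ∀ k < K, ∀ ω, θ (k + 1) ω = θ k ω - η • g k ω)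
    (hbias : ∀ k < K, ∃ δ : Ω → EuclideanSpace ℝ (Fin d),
      StronglyMeasurable[ℱ k] δ ∧ (∀ᵐ ω ∂μ, ‖δ ω‖ ≤ c₃ * γ) ∧
        μ[g k | ℱ k] =ᵐ[μ] fun ω => (c₁ * γ) • (gradient F (θ k ω) + δ ω))
    (hsq : ∀ k < K, ∀ᵐ ω ∂μ, (μ[(fun ω' => ‖g k ω'‖ ^ 2) | ℱ k]) ω ≤ C * γ ^ 2)
    (ε β : ℝ) (hε : 0 < ε) (hβ : 0 < β)
    (hKbig : (K : ℝ) ≥ 1 / (ε ^ 2 * β ^ 2) *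
      (2 * (F θ₀ - sInf (Set.range F)) / (η₀ * γ₀ * c₁) + c₃ ^ 2 * γ₀ ^ 2
        + C * μₛ * η₀ * γ₀ / c₁) ^ 2) :
    ENNReal.ofReal (1 - β) ≤
      μ {ω | ∃ k < K, ‖gradient F (θ k ω)‖ ^ 2 < ε} := by
  classical
  by_cases hd : d = 0
  · subst hd
    have hset : {ω | ∃ k < K, ‖gradient F (θ k ω)‖ ^ 2 < ε} = Set.univ := by
      ext ω
      simp only [Set.mem_setOf_eq, Set.mem_univ, iff_true]
      refine ⟨0, hK, ?_⟩
      have hz : gradient F (θ 0 ω) = 0 := Subsingleton.elim _ _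
      rw [hz, norm_zero]
      simpa using hε
    rw [hset, measure_univ]
    exact ENNReal.ofReal_le_one.2 (by linarith)
  -- main case d ≠ 0
  have hμ0 : 0 ≤ μₛ := by
    have hi : (0:ℕ) < d := Nat.pos_of_ne_zero hd
    have h := hsmooth 0 (EuclideanSpace.single ⟨0, hi⟩ (1:ℝ))
    have hn : ‖(0 : EuclideanSpace ℝ (Fin d)) - EuclideanSpace.single ⟨0, hi⟩ (1:ℝ)‖ = 1 := by
      rw [zero_sub, norm_neg, EuclideanSpace.norm_single, norm_one]
    rw [hn, mul_one] at h
    exact le_trans (norm_nonneg _) h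
  have hKpos : (0:ℝ) < K := by exact_mod_cast hK
  have hrpos : 0 < (K:ℝ) ^ (-(1/4 : ℝ)) := Real.rpow_pos_of_pos hKpos _
  have hη : 0 < η := hηdef ▸ mul_pos hη₀ hrpos
  have hγ : 0 < γ := hγdef ▸ mul_pos hγ₀ hrpos
  have hgradcont : Continuous (gradient F) := by
    refine LipschitzWith.continuous (K := ⟨μₛ, hμ0⟩) (LipschitzWith.of_dist_le_mul fun x y => ?_)
    rw [dist_eq_norm, dist_eq_norm]
    exact hsmooth x y
  have hGsm : ∀ k, StronglyMeasurable[ℱ k] (fun ω => gradient F (θ k ω)) :=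
    fun k => hgradcont.comp_stronglyMeasurable (hadapted k).stronglyMeasurable
  have hGsm0 : ∀ k, StronglyMeasurable (fun ω => gradient F (θ k ω)) :=
    fun k => (hGsm k).mono (ℱ.le k)
  have hθL2 : ∀ k, k ≤ K → MemLp (θ k) 2 μ := by
    intro k
    induction k with
    | zero =>
      intro _
      have h0 : θ 0 = fun _ => θ₀ := funext hθ0
      rw [h0]; exact memLp_const θ₀
    | succ n ih =>
      intro h
      have hn : n < K := h
      have h1 : θ (n+1) = fun ω => θ n ω - η • g n ω := funext (hupdate n hn)
      rw [h1]
      exact (ih hn.le).sub ((hgL2 n).const_smul η)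
  have hgradbd : ∀ z, ‖gradient F z‖ ≤ ‖gradient F θ₀‖ + μₛ * ‖z - θ₀‖ := by
    intro z
    have h1 : ‖gradient F z‖ ≤ ‖gradient F θ₀‖ + ‖gradient F z - gradient F θ₀‖ := by
      have h2 : gradient F z = gradient F θ₀ + (gradient F z - gradient F θ₀) := by abel
      nth_rewrite 1 [h2]
      exact norm_add_le _ _
    have h3 := hsmooth z θ₀
    linarith
  have hGL2 : ∀ k, k ≤ K → MemLp (fun ω => gradient F (θ k ω)) 2 μ := by
    intro k hk
    have hb : MemLp (fun ω => ‖gradient F θ₀‖ + μₛ * ‖θ k ω - θ₀‖) 2 μ :=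
      (memLp_const ‖gradient F θ₀‖).add ((((hθL2 k hk).sub (memLp_const θ₀)).norm).const_mul μₛ)
    refine MemLp.of_le hb (hGsm0 k).aestronglyMeasurable ?_
    filter_upwards with ω
    have h1 := hgradbd (θ k ω)
    have h2 : (0:ℝ) ≤ ‖gradient F θ₀‖ + μₛ * ‖θ k ω - θ₀‖ := by positivity
    rw [Real.norm_eq_abs, abs_of_nonneg h2]
    exact h1
  have hGsq_int : ∀ k, k ≤ K → Integrable (fun ω => ‖gradient F (θ k ω)‖^2) μ :=
    fun k hk => (memLp_two_iff_integrable_sq_norm (hGL2 k hk).aestronglyMeasurable).1 (hGL2 k hk)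
  have hgsq_int : ∀ k, Integrable (fun ω => ‖g k ω‖^2) μ :=
    fun k => (memLp_two_iff_integrable_sq_norm (hgL2 k).aestronglyMeasurable).1 (hgL2 k)
  have hgint : ∀ k, Integrable (g k) μ := fun k => (hgL2 k).integrable one_le_two
  have hdesc := ezofl_descent F μₛ hdiff hsmooth
  have hFabs : ∀ z, |F z - F θ₀| ≤ ‖gradient F θ₀‖ * ‖z - θ₀‖ + (3*μₛ/2) * ‖z - θ₀‖^2 := by
    intro z
    have h1 := hdesc θ₀ z
    have h2 := hdesc z θ₀
    have h3 : (inner ℝ (gradient F θ₀) (z - θ₀) : ℝ) ≤ ‖gradient F θ₀‖ * ‖z - θ₀‖ := by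
      have := real_inner_le_norm (gradient F θ₀) (z - θ₀)
      linarith
    have h4 : (inner ℝ (gradient F z) (θ₀ - z) : ℝ) ≤ ‖gradient F z‖ * ‖z - θ₀‖ := by
      have := real_inner_le_norm (gradient F z) (θ₀ - z)
      rw [norm_sub_rev θ₀ z] at this
      linarith
    have h5 := hgradbd z
    have h6 : ‖θ₀ - z‖ = ‖z - θ₀‖ := norm_sub_rev _ _
    rw [h6] at h2
    have h7 : ‖gradient F z‖ * ‖z - θ₀‖ ≤ (‖gradient F θ₀‖ + μₛ * ‖z - θ₀‖) * ‖z - θ₀‖ :=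
      mul_le_mul_of_nonneg_right h5 (norm_nonneg _)
    have h8 : (‖gradient F θ₀‖ + μₛ * ‖z - θ₀‖) * ‖z - θ₀‖
        = ‖gradient F θ₀‖ * ‖z - θ₀‖ + μₛ * ‖z - θ₀‖^2 := by ring
    have h9 : (0:ℝ) ≤ μₛ * ‖z - θ₀‖^2 := mul_nonneg hμ0 (sq_nonneg _)
    rw [abs_le]
    constructor <;> linarith [h7.trans_eq h8]
  have hFint : ∀ k, k ≤ K → Integrable (fun ω => F (θ k ω)) μ := by
    intro k hk
    have hθm : AEStronglyMeasurable (θ k) μ := ((hadapted k).stronglyMeasurable.mono (ℱ.le k)).aestronglyMeasurable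
    have hsub : MemLp (fun ω => θ k ω - θ₀) 2 μ := (hθL2 k hk).sub (memLp_const θ₀)
    have hnorm1 : Integrable (fun ω => ‖θ k ω - θ₀‖) μ := hsub.norm.integrable one_le_two
    have hnorm2 : Integrable (fun ω => ‖θ k ω - θ₀‖^2) μ :=
      (memLp_two_iff_integrable_sq_norm hsub.aestronglyMeasurable).1 hsub
    refine Integrable.mono'
      (((integrable_const |F θ₀|).add (hnorm1.const_mul ‖gradient F θ₀‖)).add
        (hnorm2.const_mul (3*μₛ/2)))
      (hdiff.continuous.comp_aestronglyMeasurable hθm) ?_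
    filter_upwards with ω
    have h1 := hFabs (θ k ω)
    have h2 : |F (θ k ω)| ≤ |F θ₀| + |F (θ k ω) - F θ₀| := by
      have := abs_add_le (F θ₀) (F (θ k ω) - F θ₀)
      simpa using this
    simp only [Pi.add_apply, Real.norm_eq_abs]
    linarith
  set D : ℝ := (η*c₁*γ/2) * (c₃^2*γ^2) + μₛ*η^2/2*(C*γ^2) with hD
  -- per-step inequality
  have hstep : ∀ k, k < K →
      ∫ ω, F (θ (k+1) ω) ∂μ ≤ ∫ ω, F (θ k ω) ∂μ
        - (η*c₁*γ/2) * ∫ ω, ‖gradient F (θ k ω)‖^2 ∂μ + D := by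
    intro k hkK
    have hkK' : k ≤ K := hkK.le
    obtain ⟨δ, hδm, hδbd, hδce⟩ := hbias k hkK
    have hδm0 : StronglyMeasurable δ := hδm.mono (ℱ.le k)
    have hδL2 : MemLp δ 2 μ := by
      refine MemLp.of_le (memLp_const (c₃*γ)) hδm0.aestronglyMeasurable ?_
      filter_upwards [hδbd] with ω hω
      exact hω.trans (le_abs_self _)
    have hδint : Integrable δ μ := hδL2.integrable one_le_two
    set q : Ω → EuclideanSpace ℝ (Fin d) :=
      fun ω => (c₁*γ) • (gradient F (θ k ω) + δ ω) with hq
    have hqsm : StronglyMeasurable[ℱ k] q := by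
      have := ((hGsm k).add hδm).const_smul (c₁*γ)
      exact this
    have hqL2 : MemLp q 2 μ := by
      have := ((hGL2 k hkK').add hδL2).const_smul (c₁*γ)
      exact this
    have hqint : Integrable q μ := hqL2.integrable one_le_two
    have hcoordG : ∀ i, MemLp (fun ω => gradient F (θ k ω) i) 2 μ := by
      intro i
      refine MemLp.of_le (hGL2 k hkK').norm
        (((EuclideanSpace.proj (𝕜 := ℝ) i).continuous.comp_stronglyMeasurable
          (hGsm0 k)).aestronglyMeasurable) ?_
      filter_upwards with ω
      rw [Real.norm_eq_abs, Real.norm_eq_abs, abs_of_nonneg (norm_nonneg _)]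
      exact ezofl_coord_abs_le _ i
    have hcoordg : ∀ i, MemLp (fun ω => g k ω i) 2 μ := by
      intro i
      refine MemLp.of_le (hgL2 k).norm
        (((EuclideanSpace.proj (𝕜 := ℝ) i).continuous.comp_aestronglyMeasurable
          (hgL2 k).aestronglyMeasurable)) ?_
      filter_upwards with ω
      rw [Real.norm_eq_abs, Real.norm_eq_abs, abs_of_nonneg (norm_nonneg _)]
      exact ezofl_coord_abs_le _ i
    have hcoordq : ∀ i, MemLp (fun ω => q ω i) 2 μ := by
      intro i
      refine MemLp.of_le hqL2.norm
        (((EuclideanSpace.proj (𝕜 := ℝ) i).continuous.comp_aestronglyMeasurable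
          hqL2.aestronglyMeasurable)) ?_
      filter_upwards with ω
      rw [Real.norm_eq_abs, Real.norm_eq_abs, abs_of_nonneg (norm_nonneg _)]
      exact ezofl_coord_abs_le _ i
    have hGg_int : Integrable (fun ω => (inner ℝ (gradient F (θ k ω)) (g k ω) : ℝ)) μ :=
      ezofl_integrable_inner (hGL2 k hkK') (hgL2 k)
    have hGq_int : Integrable (fun ω => (inner ℝ (gradient F (θ k ω)) (q ω) : ℝ)) μ :=
      ezofl_integrable_inner (hGL2 k hkK') hqL2
    have hGδ_int : Integrable (fun ω => (inner ℝ (gradient F (θ k ω)) (δ ω) : ℝ)) μ :=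
      ezofl_integrable_inner (hGL2 k hkK') hδL2
    have hprod_g : ∀ i, Integrable (fun ω => gradient F (θ k ω) i * g k ω i) μ := by
      intro i
      have := ezofl_integrable_inner (hcoordG i) (hcoordg i)
      simpa [RCLike.inner_apply, mul_comm] using this
    have hprod_q : ∀ i, Integrable (fun ω => gradient F (θ k ω) i * q ω i) μ := by
      intro i
      have := ezofl_integrable_inner (hcoordG i) (hcoordq i)
      simpa [RCLike.inner_apply, mul_comm] using this
    have expand : ∀ (y : Ω → EuclideanSpace ℝ (Fin d)),
        (∀ i, Integrable (fun ω => gradient F (θ k ω) i * y ω i) μ) →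
        ∫ ω, (inner ℝ (gradient F (θ k ω)) (y ω) : ℝ) ∂μ
          = ∑ i : Fin d, ∫ ω, gradient F (θ k ω) i * y ω i ∂μ := by
      intro y hy
      rw [← integral_finset_sum _ (fun i _ => hy i)]
      refine integral_congr_ae (Filter.Eventually.of_forall fun ω => ?_)
      show inner ℝ (gradient F (θ k ω)) (y ω) = _
      rw [PiLp.inner_apply]
      simp [RCLike.inner_apply, mul_comm]
    have hIq : ∫ ω, (inner ℝ (gradient F (θ k ω)) (g k ω) : ℝ) ∂μ
        = ∫ ω, (inner ℝ (gradient F (θ k ω)) (q ω) : ℝ) ∂μ := by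
      rw [expand _ hprod_g, expand _ hprod_q]
      refine Finset.sum_congr rfl fun i _ => ?_
      have hGi_sm : StronglyMeasurable[ℱ k] (fun ω => gradient F (θ k ω) i) :=
        (EuclideanSpace.proj (𝕜 := ℝ) i).continuous.comp_stronglyMeasurable (hGsm k)
      have hgi_int : Integrable (fun ω => g k ω i) μ := (hcoordg i).integrable one_le_two
      have hcoord := ezofl_condexp_coord (ℱ.le k) (hgint k) hqint hqsm hδce i
      have hpull := condExp_mul_of_stronglyMeasurable_left hGi_sm (hprod_g i) hgi_int
      calc ∫ ω, gradient F (θ k ω) i * g k ω i ∂μ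
          = ∫ ω, (μ[(fun ω' => gradient F (θ k ω') i * g k ω' i)|ℱ k]) ω ∂μ :=
            (integral_condExp (ℱ.le k)).symm
        _ = ∫ ω, gradient F (θ k ω) i * (μ[(fun ω' => g k ω' i)|ℱ k]) ω ∂μ := by
            refine integral_congr_ae (hpull.mono fun ω hω => ?_)
            exact hω
        _ = ∫ ω, gradient F (θ k ω) i * q ω i ∂μ := by
            refine integral_congr_ae (hcoord.mono fun ω hω => ?_)
            have hω' : q ω i = (μ[(fun ω' => g k ω' i)|ℱ k]) ω := hω
            simp only [← hω']
    have hIq2 : ∫ ω, (inner ℝ (gradient F (θ k ω)) (q ω) : ℝ) ∂μ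
        = (c₁*γ) * ((∫ ω, ‖gradient F (θ k ω)‖^2 ∂μ)
            + ∫ ω, (inner ℝ (gradient F (θ k ω)) (δ ω) : ℝ) ∂μ) := by
      have e : ∀ ω, (inner ℝ (gradient F (θ k ω)) (q ω) : ℝ)
          = (c₁*γ) * (‖gradient F (θ k ω)‖^2 + inner ℝ (gradient F (θ k ω)) (δ ω)) := by
        intro ω
        rw [hq]
        rw [real_inner_smul_right, inner_add_right, real_inner_self_eq_norm_sq]
      simp_rw [e]
      rw [integral_const_mul, integral_add (hGsq_int k hkK') hGδ_int]
    have hJ : -(1/2) * (∫ ω, ‖gradient F (θ k ω)‖^2 ∂μ) - (1/2)*(c₃*γ)^2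
        ≤ ∫ ω, (inner ℝ (gradient F (θ k ω)) (δ ω) : ℝ) ∂μ := by
      have hpt : ∀ᵐ ω ∂μ, -(1/2)*‖gradient F (θ k ω)‖^2 - (1/2)*(c₃*γ)^2
          ≤ (inner ℝ (gradient F (θ k ω)) (δ ω) : ℝ) := by
        filter_upwards [hδbd] with ω hω
        have h1 : |(inner ℝ (gradient F (θ k ω)) (δ ω) : ℝ)|
            ≤ ‖gradient F (θ k ω)‖ * ‖δ ω‖ := abs_real_inner_le_norm _ _
        have h2 : ‖gradient F (θ k ω)‖ * ‖δ ω‖ ≤ ‖gradient F (θ k ω)‖ * (c₃*γ) :=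
          mul_le_mul_of_nonneg_left hω (norm_nonneg _)
        have h3 := neg_abs_le (inner ℝ (gradient F (θ k ω)) (δ ω) : ℝ)
        nlinarith [sq_nonneg (‖gradient F (θ k ω)‖ - c₃*γ)]
      have hlhs_int : Integrable
          (fun ω => -(1/2)*‖gradient F (θ k ω)‖^2 - (1/2)*(c₃*γ)^2) μ :=
        ((hGsq_int k hkK').const_mul (-(1/2))).sub (integrable_const _)
      have h4 := integral_mono_ae hlhs_int hGδ_int hpt
      have h5 : ∫ ω, (-(1/2)*‖gradient F (θ k ω)‖^2 - (1/2)*(c₃*γ)^2) ∂μ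
          = -(1/2) * (∫ ω, ‖gradient F (θ k ω)‖^2 ∂μ) - (1/2)*(c₃*γ)^2 := by
        rw [integral_sub ((hGsq_int k hkK').const_mul (-(1/2))) (integrable_const _),
          integral_const_mul, integral_const]
        simp [measure_univ]
      rw [h5] at h4
      exact h4
    have hS : ∫ ω, ‖g k ω‖^2 ∂μ ≤ C*γ^2 := by
      have h1 : ∫ ω, ‖g k ω‖^2 ∂μ = ∫ ω, (μ[(fun ω' => ‖g k ω'‖^2)|ℱ k]) ω ∂μ :=
        (integral_condExp (ℱ.le k)).symm
      rw [h1]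
      calc ∫ ω, (μ[(fun ω' => ‖g k ω'‖^2)|ℱ k]) ω ∂μ ≤ ∫ _ω, C*γ^2 ∂μ :=
            integral_mono_ae integrable_condExp (integrable_const _) (hsq k hkK)
        _ = C*γ^2 := by simp [measure_univ]
    have hpt : ∀ ω, F (θ (k+1) ω) ≤ F (θ k ω)
        - η * inner ℝ (gradient F (θ k ω)) (g k ω) + (μₛ/2*η^2) * ‖g k ω‖^2 := by
      intro ω
      rw [hupdate k hkK ω]
      have h1 := hdesc (θ k ω) (θ k ω - η • g k ω)
      have h2 : θ k ω - η • g k ω - θ k ω = -(η • g k ω) := by abel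
      rw [h2] at h1
      rw [inner_neg_right, real_inner_smul_right, norm_neg, norm_smul] at h1
      have h3 : (‖η‖ * ‖g k ω‖)^2 = η^2 * ‖g k ω‖^2 := by
        rw [mul_pow, Real.norm_eq_abs, sq_abs]
      rw [h3] at h1
      linarith
    have hint1 : Integrable
        (fun ω => F (θ k ω) - η * inner ℝ (gradient F (θ k ω)) (g k ω)) μ :=
      (hFint k hkK').sub (hGg_int.const_mul η)
    have hint2 : Integrable (fun ω => (μₛ/2*η^2) * ‖g k ω‖^2) μ :=
      (hgsq_int k).const_mul (μₛ/2*η^2)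
    have hrhs_int : Integrable (fun ω => F (θ k ω)
        - η * inner ℝ (gradient F (θ k ω)) (g k ω) + (μₛ/2*η^2) * ‖g k ω‖^2) μ :=
      hint1.add hint2
    have hint : ∫ ω, F (θ (k+1) ω) ∂μ ≤ ∫ ω, (F (θ k ω)
        - η * inner ℝ (gradient F (θ k ω)) (g k ω) + (μₛ/2*η^2) * ‖g k ω‖^2) ∂μ :=
      integral_mono (hFint (k+1) hkK) hrhs_int hpt
    rw [integral_add hint1 hint2,
      integral_sub (hFint k hkK') (hGg_int.const_mul η),
      integral_const_mul, integral_const_mul] at hint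
    rw [hIq, hIq2] at hint
    have h6 := mul_le_mul_of_nonneg_left hJ (by positivity : (0:ℝ) ≤ η*c₁*γ)
    have h7 := mul_le_mul_of_nonneg_left hS (by positivity : (0:ℝ) ≤ μₛ/2*η^2)
    rw [hD]
    linarith [hint, h6, h7]
  -- telescoping
  have htel : ∀ n, n ≤ K → ∫ ω, F (θ n ω) ∂μ
      + (η*c₁*γ/2) * ∑ k ∈ Finset.range n, ∫ ω, ‖gradient F (θ k ω)‖^2 ∂μ
      ≤ F θ₀ + n * D := by
    intro n
    induction n with
    | zero =>
      intro _
      simp only [Finset.range_zero, Finset.sum_empty, mul_zero, add_zero, Nat.cast_zero, zero_mul]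
      have h0 : ∫ ω, F (θ 0 ω) ∂μ = F θ₀ := by
        simp only [hθ0]
        simp [measure_univ]
      rw [h0]
    | succ n ih =>
      intro h
      have hn : n < K := h
      have h1 := hstep n hn
      have h2 := ih hn.le
      rw [Finset.sum_range_succ, Nat.cast_succ]
      have h3 : (η*c₁*γ/2) * (∑ k ∈ Finset.range n, ∫ ω, ‖gradient F (θ k ω)‖^2 ∂μ
          + ∫ ω, ‖gradient F (θ n ω)‖^2 ∂μ)
          = (η*c₁*γ/2) * ∑ k ∈ Finset.range n, ∫ ω, ‖gradient F (θ k ω)‖^2 ∂μ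
          + (η*c₁*γ/2) * ∫ ω, ‖gradient F (θ n ω)‖^2 ∂μ := by ring
      rw [h3]
      linarith
  set Δ : ℝ := F θ₀ - sInf (Set.range F) with hΔ
  have hsum : (η*c₁*γ/2) * ∑ k ∈ Finset.range K, ∫ ω, ‖gradient F (θ k ω)‖^2 ∂μ
      ≤ Δ + K * D := by
    have h1 := htel K le_rfl
    have h2 : sInf (Set.range F) ≤ ∫ ω, F (θ K ω) ∂μ := by
      have h3 : ∀ ω, sInf (Set.range F) ≤ F (θ K ω) := fun ω => csInf_le hbdd ⟨θ K ω, rfl⟩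
      calc sInf (Set.range F) = ∫ _ω, sInf (Set.range F) ∂μ := by simp [measure_univ]
        _ ≤ _ := integral_mono (integrable_const _) (hFint K le_rfl) h3
    rw [hΔ]
    linarith
  -- Markov
  set A : Set Ω := {ω | ∀ k, k < K → ε ≤ ‖gradient F (θ k ω)‖^2} with hA
  have hAmeas : MeasurableSet A := by
    have hAeq : A = ⋂ k, ⋂ (_ : k < K), {ω | ε ≤ ‖gradient F (θ k ω)‖^2} := by
      ext ω; simp [hA]
    rw [hAeq]
    refine MeasurableSet.iInter fun k => MeasurableSet.iInter fun _ => ?_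
    exact measurableSet_le measurable_const (((hGsm0 k).norm.measurable).pow_const 2)
  have hmark : ∀ k, k < K → ε * (μ A).toReal ≤ ∫ ω, ‖gradient F (θ k ω)‖^2 ∂μ := by
    intro k hkK
    calc ε * (μ A).toReal ≤ ∫ ω in A, ‖gradient F (θ k ω)‖^2 ∂μ :=
        by
          have := setIntegral_ge_of_const_le hAmeas (measure_ne_top μ A)
            (fun ω hω => hω k hkK) (hGsq_int k hkK.le).integrableOn
          rw [smul_eq_mul, measureReal_def, mul_comm] at this
          exact this
      _ ≤ ∫ ω, ‖gradient F (θ k ω)‖^2 ∂μ :=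
        setIntegral_le_integral (hGsq_int k hkK.le)
          (Filter.Eventually.of_forall fun ω => by positivity)
  have hmarksum : (K:ℝ) * (ε * (μ A).toReal)
      ≤ ∑ k ∈ Finset.range K, ∫ ω, ‖gradient F (θ k ω)‖^2 ∂μ := by
    calc (K:ℝ) * (ε * (μ A).toReal)
        = ∑ _k ∈ Finset.range K, ε * (μ A).toReal := by
          rw [Finset.sum_const, Finset.card_range, nsmul_eq_mul]
      _ ≤ _ := Finset.sum_le_sum fun k hk => hmark k (Finset.mem_range.1 hk)
  have hΔ0 : 0 ≤ Δ := sub_nonneg.2 (csInf_le hbdd ⟨θ₀, rfl⟩)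
  set B : ℝ := 2 * Δ / (η₀ * γ₀ * c₁) + c₃ ^ 2 * γ₀ ^ 2 + C * μₛ * η₀ * γ₀ / c₁ with hB
  have hB0 : 0 ≤ B := by positivity
  have hsqrtpos : 0 < Real.sqrt K := Real.sqrt_pos.2 hKpos
  have hr2 : ((K:ℝ) ^ (-(1/4 : ℝ)))^2 = (Real.sqrt K)⁻¹ := by
    rw [sq, ← Real.rpow_add hKpos]
    norm_num
    rw [Real.rpow_neg hKpos.le, Real.sqrt_eq_rpow]
  have hKr2 : (K:ℝ) * ((K:ℝ) ^ (-(1/4 : ℝ)))^2 = Real.sqrt K := by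
    rw [hr2]
    rw [← Real.mul_self_sqrt hKpos.le]
    field_simp
    rw [Real.sqrt_sq hsqrtpos.le]
  have hkey : 2*Δ/(η*γ*c₁*K) + c₃^2*γ^2 + μₛ*η*C*γ/c₁ ≤ ε*β := by
    have hlhs : 2*Δ/(η*γ*c₁*K) + c₃^2*γ^2 + μₛ*η*C*γ/c₁ = B / Real.sqrt K := by
      rw [hB, hηdef, hγdef]
      have hne : Real.sqrt K ≠ 0 := hsqrtpos.ne'
      have h1 : η₀ * (K:ℝ) ^ (-(1/4 : ℝ)) * (γ₀ * (K:ℝ) ^ (-(1/4 : ℝ))) * c₁ * K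
          = η₀ * γ₀ * c₁ * Real.sqrt K := by
        rw [← hKr2]; ring
      have h2 : (γ₀ * (K:ℝ) ^ (-(1/4 : ℝ)))^2 = γ₀^2 * (Real.sqrt K)⁻¹ := by
        rw [mul_pow, hr2]
      have h3 : μₛ * (η₀ * (K:ℝ) ^ (-(1/4 : ℝ))) * C * (γ₀ * (K:ℝ) ^ (-(1/4 : ℝ))) / c₁
          = C * μₛ * η₀ * γ₀ / c₁ * (Real.sqrt K)⁻¹ := by
        rw [← hr2]; ring
      rw [h1, h2, h3]
      field_simp
    rw [hlhs, div_le_iff₀ hsqrtpos]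
    have h1 : B^2 ≤ (ε*β*Real.sqrt K)^2 := by
      have h2 : (ε*β*Real.sqrt K)^2 = ε^2*β^2*K := by
        rw [mul_pow, mul_pow, Real.sq_sqrt hKpos.le]
      rw [h2]
      have h3 : (0:ℝ) < ε^2*β^2 := by positivity
      calc B^2 = (ε^2*β^2) * (1/(ε^2*β^2) * B^2) := by field_simp
        _ ≤ (ε^2*β^2) * K := by
            refine mul_le_mul_of_nonneg_left ?_ h3.le
            rw [hB, hΔ]
            exact hKbig
        _ = ε^2*β^2*K := by ring
    have h4 : 0 ≤ ε*β*Real.sqrt K := by positivity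
    have h5 := Real.sqrt_le_sqrt h1
    rwa [Real.sqrt_sq hB0, Real.sqrt_sq h4] at h5
  have hkey2 : Δ + K * D ≤ (η*c₁*γ/2) * ((K:ℝ) * (ε * β)) := by
    have hfac : (0:ℝ) < η*γ*c₁*K/2 := by positivity
    have heq : Δ + K*D = (η*γ*c₁*K/2) * (2*Δ/(η*γ*c₁*K) + c₃^2*γ^2 + μₛ*η*C*γ/c₁) := by
      rw [hD]
      field_simp
      ring
    rw [heq]
    calc (η*γ*c₁*K/2) * (2*Δ/(η*γ*c₁*K) + c₃^2*γ^2 + μₛ*η*C*γ/c₁)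
        ≤ (η*γ*c₁*K/2) * (ε*β) := mul_le_mul_of_nonneg_left hkey hfac.le
      _ = (η*c₁*γ/2) * ((K:ℝ) * (ε * β)) := by ring
  have hAle : (μ A).toReal ≤ β := by
    have h1 : (η*c₁*γ/2) * ((K:ℝ) * (ε * (μ A).toReal))
        ≤ (η*c₁*γ/2) * ∑ k ∈ Finset.range K, ∫ ω, ‖gradient F (θ k ω)‖^2 ∂μ :=
      mul_le_mul_of_nonneg_left hmarksum (by positivity)
    have h3 : (η*c₁*γ/2) * ((K:ℝ) * (ε * (μ A).toReal))
        ≤ (η*c₁*γ/2) * ((K:ℝ) * (ε * β)) := le_trans h1 (le_trans hsum hkey2)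
    have h4 : (0:ℝ) < (η*c₁*γ/2) * (K:ℝ) * ε := by positivity
    have h5 : ((η*c₁*γ/2) * (K:ℝ) * ε) * (μ A).toReal
        ≤ ((η*c₁*γ/2) * (K:ℝ) * ε) * β := by
      calc ((η*c₁*γ/2) * (K:ℝ) * ε) * (μ A).toReal
          = (η*c₁*γ/2) * ((K:ℝ) * (ε * (μ A).toReal)) := by ring
        _ ≤ (η*c₁*γ/2) * ((K:ℝ) * (ε * β)) := h3
        _ = ((η*c₁*γ/2) * (K:ℝ) * ε) * β := by ring
    exact le_of_mul_le_mul_left h5 h4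
  have hcompl : {ω | ∃ k < K, ‖gradient F (θ k ω)‖^2 < ε} = Aᶜ := by
    ext ω
    simp [hA, not_forall, not_le]
  rw [hcompl, measure_compl hAmeas (measure_ne_top μ A), measure_univ]
  have hμA : μ A ≤ ENNReal.ofReal β := by
    rw [← ENNReal.ofReal_toReal (measure_ne_top μ A)]
    exact ENNReal.ofReal_le_ofReal hAle
  calc ENNReal.ofReal (1-β) = 1 - ENNReal.ofReal β := by
        rw [ENNReal.ofReal_sub _ hβ.le, ENNReal.ofReal_one]
    _ ≤ 1 - μ A := tsub_le_tsub_left hμA 1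
end
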